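/- arXiv:2511.03335 — 4 statements merged into one kernel-verified Lean document; each statement's English description precedes it below -/
import Mathlib

section
/- For every signed graph (G, σ): χ_b(G, σ) ≤ χ((G, σ)⁻) ≤ 2·χ_b(G, σ). -/
open SimpleGraph

namespace SignedGS

variable {V : Type*}

/-- The sign of a walk in a signed graph: the product of the signs of its edges. -/
def walkSign {G : SimpleGraph V} (σ : Sym2 V → ℤˣ) {u v : V} (w : G.Walk u v) : ℤˣ :=
  (w.edges.map σ).prod

/-- `X` is a balanced set of `(G, σ)`: every cycle of the subgraph induced on `X`
is positive. -/
def IsBalancedSet (G : SimpleGraph V) (σ : Sym2 V → ℤˣ) (X : Set V) : Prop :=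
  ∀ ⦃v : V⦄ (w : G.Walk v v), w.IsCycle → (∀ u ∈ w.support, u ∈ X) → walkSign σ w = 1

/-- `(G, σ)` can be covered by `n` balanced sets. -/
def BalancedColorable (G : SimpleGraph V) (σ : Sym2 V → ℤˣ) (n : ℕ) : Prop :=
  ∃ f : V → Fin n, ∀ i : Fin n, IsBalancedSet G σ {v | f v = i}

/-- The balanced chromatic number of `(G, σ)`. -/
noncomputable def balancedChromNum (G : SimpleGraph V) (σ : Sym2 V → ℤˣ) : ℕ :=
  sInf {n | BalancedColorable G σ n}

/-- The set `X ⊆ V` can be covered by `n` sets each of which is balanced in `(G, σ)`. -/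
def BalancedColorableOn (G : SimpleGraph V) (σ : Sym2 V → ℤˣ) (X : Set V) (n : ℕ) : Prop :=
  ∃ f : V → Fin n, ∀ i : Fin n, IsBalancedSet G σ {v | v ∈ X ∧ f v = i}

/-- The balanced chromatic number of the signed subgraph of `(G, σ)` induced on `X`. -/
noncomputable def balancedChromNumOn (G : SimpleGraph V) (σ : Sym2 V → ℤˣ) (X : Set V) : ℕ :=
  sInf {n | BalancedColorableOn G σ X n}

/-- `(G, σ)⁻` : the spanning subgraph of `G` consisting of the negative edges. -/
def negSubgraph (G : SimpleGraph V) (σ : Sym2 V → ℤˣ) : SimpleGraph V where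
  Adj u v := G.Adj u v ∧ σ s(u, v) = -1
  symm := by
    constructor
    intro u v h
    refine ⟨h.1.symm, ?_⟩
    rw [Sym2.eq_swap]
    exact h.2
  loopless := by constructor; intro v h; exact G.loopless.irrefl v h.1

/-- Two signatures on `G` are switching equivalent. -/
def SwitchEquiv (G : SimpleGraph V) (σ σ' : Sym2 V → ℤˣ) : Prop :=
  ∃ η : V → ℤˣ, ∀ u v : V, G.Adj u v → σ' s(u, v) = η u * σ s(u, v) * η v

/-- Every triangle of `(G, σ)` is positive. -/
def AllTrianglesPositive (G : SimpleGraph V) (σ : Sym2 V → ℤˣ) : Prop :=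
  ∀ u v w : V, G.Adj u v → G.Adj v w → G.Adj u w →
    σ s(u, v) * σ s(v, w) * σ s(u, w) = 1

/-- `G` contains an induced copy of `F`. -/
def HasInducedCopy {W : Type*} (F : SimpleGraph W) (G : SimpleGraph V) : Prop :=
  ∃ f : W ↪ V, ∀ a b : W, G.Adj (f a) (f b) ↔ F.Adj a b

/-- The star `K_{1,m}` with center `0` and `m` leaves. -/
def starGraph (m : ℕ) : SimpleGraph (Fin (m + 1)) where
  Adj a b := (a = 0 ∨ b = 0) ∧ a ≠ b
  symm := by constructor; rintro a b ⟨h1, h2⟩; exact ⟨h1.symm, h2.symm⟩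
  loopless := by constructor; rintro a ⟨_, h⟩; exact h rfl

private def disjUnionAdj {W1 W2 : Type*} (F1 : SimpleGraph W1) (F2 : SimpleGraph W2) :
    W1 ⊕ W2 → W1 ⊕ W2 → Prop
  | .inl x, .inl y => F1.Adj x y
  | .inr x, .inr y => F2.Adj x y
  | _, _ => False

/-- The disjoint union `F1 + F2` of two graphs. -/
def disjUnion {W1 W2 : Type*} (F1 : SimpleGraph W1) (F2 : SimpleGraph W2) :
    SimpleGraph (W1 ⊕ W2) where
  Adj := disjUnionAdj F1 F2
  symm := by
    constructor
    rintro (x | x) (y | y) h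
    · exact F1.adj_symm h
    · exact h.elim
    · exact h.elim
    · exact F2.adj_symm h
  loopless := by
    constructor
    rintro (x | x) h
    · exact F1.loopless.irrefl x h
    · exact F2.loopless.irrefl x h

private def fullJoinAdj {W1 W2 : Type*} (G1 : SimpleGraph W1) (G2 : SimpleGraph W2) :
    W1 ⊕ W2 → W1 ⊕ W2 → Prop
  | .inl x, .inl y => G1.Adj x y
  | .inr x, .inr y => G2.Adj x y
  | _, _ => True

/-- The full join `G1 ⋈ G2` of two vertex-disjoint graphs. -/
def fullJoin {W1 W2 : Type*} (G1 : SimpleGraph W1) (G2 : SimpleGraph W2) :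
    SimpleGraph (W1 ⊕ W2) where
  Adj := fullJoinAdj G1 G2
  symm := by
    constructor
    rintro (x | x) (y | y) h
    · exact G1.adj_symm h
    · trivial
    · trivial
    · exact G2.adj_symm h
  loopless := by
    constructor
    rintro (x | x) h
    · exact G1.loopless.irrefl x h
    · exact G2.loopless.irrefl x h

/-- The linear forest with `l` components, the `i`-th component being a path
on `m i` vertices. -/
def linearForest (l : ℕ) (m : Fin l → ℕ) : SimpleGraph (Σ i : Fin l, Fin (m i)) where
  Adj a b := a.1 = b.1 ∧ ((a.2 : ℕ) + 1 = (b.2 : ℕ) ∨ (b.2 : ℕ) + 1 = (a.2 : ℕ))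
  symm := by constructor; rintro a b ⟨h1, h2⟩; exact ⟨h1.symm, h2.symm⟩
  loopless := by constructor; rintro a ⟨_, h⟩; omega

/-- `(G, σ)` has an induced subgraph switching equivalent to the all-negative `K_4`. -/
def HasSwitchK4Neg (G : SimpleGraph V) (σ : Sym2 V → ℤˣ) : Prop :=
  ∃ f : Fin 4 ↪ V, (∀ a b : Fin 4, a ≠ b → G.Adj (f a) (f b)) ∧
    ∃ η : Fin 4 → ℤˣ, ∀ a b : Fin 4, a ≠ b → η a * σ s(f a, f b) * η b = -1

/-- `(G, σ)` has a triangle all of whose edges are negative. -/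
def HasNegTriangle (G : SimpleGraph V) (σ : Sym2 V → ℤˣ) : Prop :=
  ∃ u v w : V, G.Adj u v ∧ G.Adj v w ∧ G.Adj u w ∧
    σ s(u, v) = -1 ∧ σ s(v, w) = -1 ∧ σ s(u, w) = -1

/-- `(G, σ)` has four vertices inducing a copy of `(K_4, M)`: a complete graph on four
vertices whose negative edges form a perfect matching. -/
def HasK4M (G : SimpleGraph V) (σ : Sym2 V → ℤˣ) : Prop :=
  ∃ a b c d : V, a ≠ b ∧ a ≠ c ∧ a ≠ d ∧ b ≠ c ∧ b ≠ d ∧ c ≠ d ∧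
    G.Adj a b ∧ G.Adj a c ∧ G.Adj a d ∧ G.Adj b c ∧ G.Adj b d ∧ G.Adj c d ∧
    σ s(a, b) = -1 ∧ σ s(c, d) = -1 ∧
    σ s(a, c) = 1 ∧ σ s(a, d) = 1 ∧ σ s(b, c) = 1 ∧ σ s(b, d) = 1

/-- The vertices of the shift graph `S_{k,n}`: strictly increasing `k`-sequences
with values in `{1, …, n}`. -/
def ShiftVertex (k n : ℕ) : Type :=
  {s : Fin k → ℕ // StrictMono s ∧ ∀ i, s i ∈ Finset.Icc 1 n}

/-- `b` is obtained from `a` by shifting: `b = (a_2, …, a_k, t)` for some `t`. -/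
def ShiftFollows {k n : ℕ} (a b : ShiftVertex k n) : Prop :=
  ∀ (i : ℕ) (h : i + 1 < k), b.1 ⟨i, Nat.lt_of_succ_lt h⟩ = a.1 ⟨i + 1, h⟩

/-- The shift graph `S_{k,n}`. -/
def shiftGraph (k n : ℕ) : SimpleGraph (ShiftVertex k n) where
  Adj a b := a ≠ b ∧ (ShiftFollows a b ∨ ShiftFollows b a)
  symm := by constructor; rintro a b ⟨h1, h2⟩; exact ⟨h1.symm, h2.symm⟩
  loopless := by constructor; rintro a ⟨h, _⟩; exact h rfl



section Aux

open SimpleGraph.Walk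

variable {G : SimpleGraph V} {σ : Sym2 V → ℤˣ}

@[simp] lemma walkSign_nil {v : V} : walkSign σ (Walk.nil : G.Walk v v) = 1 := rfl

@[simp] lemma walkSign_cons {u v w : V} (h : G.Adj u v) (p : G.Walk v w) :
    walkSign σ (Walk.cons h p) = σ s(u, v) * walkSign σ p := by
  simp [walkSign]

@[simp] lemma walkSign_copy {u v u' v' : V} (p : G.Walk u v) (hu : u = u') (hv : v = v') :
    walkSign σ (p.copy hu hv) = walkSign σ p := by
  subst hu hv; rfl

lemma walkSign_append {u v w : V} (p : G.Walk u v) (q : G.Walk v w) :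
    walkSign σ (p.append q) = walkSign σ p * walkSign σ q := by
  simp [walkSign, Walk.edges_append]

@[simp] lemma walkSign_reverse {u v : V} (p : G.Walk u v) :
    walkSign σ p.reverse = walkSign σ p := by
  simp [walkSign, Walk.edges_reverse, List.prod_reverse]

lemma walkSign_rotate [DecidableEq V] {u v : V} (c : G.Walk v v) (h : u ∈ c.support) :
    walkSign σ (c.rotate u h) = walkSign σ c :=
  List.Perm.prod_eq (((Walk.rotate_edges c u h).perm).map σ)

lemma walkSign_mapLe {G' : SimpleGraph V} (hle : G ≤ G') {u v : V} (p : G.Walk u v) :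
    walkSign σ (p.mapLe hle) = walkSign σ p := by
  have : (σ ∘ Sym2.map ⇑(Hom.ofLE hle)) = σ := by
    funext e
    induction e using Sym2.ind with
    | _ a b => simp [Hom.ofLE_apply]
  simp [walkSign, Walk.edges_map, this]

lemma support_mapLe {G' : SimpleGraph V} (hle : G ≤ G') {u v : V} (p : G.Walk u v) :
    (p.mapLe hle).support = p.support := by
  have : ⇑(Hom.ofLE hle) = id := rfl
  simp [Walk.support_map, this]


lemma length_eq_one_of_isPath_of_mem_edges {v y : V} (p : G.Walk v y)
    (hp : p.IsPath) (he : s(y, v) ∈ p.edges) : p.length = 1 := by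
  cases p with
  | nil => simp at he
  | @cons _ z _ h r =>
    rw [Walk.edges_cons, List.mem_cons] at he
    rw [Walk.cons_isPath_iff] at hp
    rcases he with he | he
    · have hyv : y ≠ v := by
        rintro rfl
        exact hp.2 (Walk.end_mem_support r)
      have hzy : z = y := by
        rw [Sym2.eq_iff] at he
        rcases he with ⟨h1, h2⟩ | ⟨h1, h2⟩
        · exact absurd h1 hyv
        · exact h1.symm
      subst hzy
      cases r with
      | nil => simp
      | cons h' r' =>
        exfalso
        rw [Walk.cons_isPath_iff] at hp
        exact hp.1.2 (Walk.end_mem_support r')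
    · exact absurd (Walk.snd_mem_support_of_mem_edges r he) hp.2

lemma isCycle_of_tail_nodup {v : V} (w : G.Walk v v)
    (h3 : 3 ≤ w.length) (hnodup : w.support.tail.Nodup) : w.IsCycle := by
  cases w with
  | nil => simp at h3
  | @cons _ x _ h q =>
    obtain ⟨y, q', h', heq⟩ := Walk.exists_cons_eq_concat h q
    rw [heq] at h3 hnodup ⊢
    have hsupp : (q'.concat h').support = q'.support ++ [v] := by
      rw [Walk.support_concat]
    have hsupp' : q'.support = v :: q'.support.tail := q'.support_eq_cons
    have htail : (q'.concat h').support.tail = q'.support.tail ++ [v] := by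
      rw [hsupp, hsupp']; rfl
    rw [htail] at hnodup
    have hnd : q'.support.tail.Nodup ∧ v ∉ q'.support.tail := by
      have h1 := List.Nodup.of_append_left hnodup
      have h2 := List.disjoint_of_nodup_append hnodup
      exact ⟨h1, fun hv => h2 hv (List.mem_singleton_self v)⟩
    have hpath : q'.IsPath := by
      apply Walk.IsPath.mk'
      rw [hsupp']
      exact List.nodup_cons.mpr ⟨hnd.2, hnd.1⟩
    have hlen : q'.length + 1 = (q'.concat h').length := (Walk.length_concat q' h').symm
    have hEdge : s(y, v) ∉ q'.edges := by
      intro hmem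
      have := length_eq_one_of_isPath_of_mem_edges q' hpath hmem
      omega
    constructor
    · constructor
      · constructor
        rw [Walk.edges_concat, List.concat_eq_append]
        exact List.Nodup.append hpath.edges_nodup (List.nodup_singleton _)
          (by simpa using hEdge)
      · exact Walk.concat_ne_nil q' h'
    · rw [htail]
      exact hnodup

lemma split_closed_walk [DecidableEq V] {u : V} (c : G.Walk u u)
    (hc : 2 ≤ c.support.tail.count u) :
    ∃ (c1 c2 : G.Walk u u), c1.length + c2.length = c.length ∧ 1 ≤ c1.length ∧
      1 ≤ c2.length ∧ walkSign σ c1 * walkSign σ c2 = walkSign σ c ∧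
      (∀ z ∈ c1.support, z ∈ c.support) ∧ (∀ z ∈ c2.support, z ∈ c.support) := by
  cases c with
  | nil => simp at hc
  | @cons _ y _ h3 q3 =>
    rw [Walk.support_cons, List.tail_cons] at hc
    have hu3 : u ∈ q3.support := by
      apply List.count_pos_iff.mp; omega
    refine ⟨Walk.cons h3 (q3.takeUntil u hu3), q3.dropUntil u hu3, ?_, ?_, ?_, ?_, ?_, ?_⟩
    · have := congrArg Walk.length (q3.take_spec hu3)
      rw [Walk.length_append] at this
      simp only [Walk.length_cons]
      omega
    · simp
    · -- dropUntil has positive length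
      have hcount1 := q3.count_support_takeUntil_eq_one hu3
      have hsplit : q3.support = (q3.takeUntil u hu3).support ++ (q3.dropUntil u hu3).support.tail := by
        conv_lhs => rw [← q3.take_spec hu3]
        exact Walk.support_append _ _
      rw [hsplit, List.count_append, hcount1] at hc
      have hlen := (q3.dropUntil u hu3).length_support
      have htl := List.length_tail (l := (q3.dropUntil u hu3).support)
      by_contra h0
      push_neg at h0
      have hnil : (q3.dropUntil u hu3).support.tail = [] :=
        List.eq_nil_of_length_eq_zero (by omega)
      rw [hnil] at hc
      simp at hc
    · rw [walkSign_cons, walkSign_cons]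
      conv_rhs => rw [← q3.take_spec hu3]
      rw [walkSign_append, mul_assoc]
    · intro z hz
      rw [Walk.support_cons, List.mem_cons] at hz ⊢
      rcases hz with rfl | hz
      · exact Or.inl rfl
      · exact Or.inr (q3.support_takeUntil_subset hu3 hz)
    · intro z hz
      rw [Walk.support_cons, List.mem_cons]
      exact Or.inr (q3.support_dropUntil_subset hu3 hz)

lemma balanced_closedWalk {X : Set V} (hX : IsBalancedSet G σ X) :
    ∀ (n : ℕ) {v : V} (w : G.Walk v v), w.length ≤ n → (∀ u ∈ w.support, u ∈ X) →
      walkSign σ w = 1 := by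
  classical
  intro n
  induction n with
  | zero =>
    intro v w hlen _
    cases w with
    | nil => simp
    | cons h q => simp at hlen
  | succ n ih =>
    intro v w hlen hsupp
    cases w with
    | nil => simp
    | @cons _ x _ hadj q =>
      by_cases hnd : (Walk.cons hadj q).support.tail.Nodup
      · cases q with
        | nil => exact absurd hadj (G.loopless.irrefl v)
        | @cons _ z _ hadj2 r =>
          cases r with
          | nil =>
            rw [walkSign_cons, walkSign_cons, walkSign_nil, mul_one,
              Sym2.eq_swap (a := x) (b := v)]
            exact Int.units_mul_self _
          | cons hadj3 r' =>
            exact hX _ (isCycle_of_tail_nodup _ (by simp only [Walk.length_cons]; omega) hnd) hsupp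
      · obtain ⟨u, hdup⟩ := List.exists_duplicate_iff_not_nodup.mpr hnd
        have hcount : 2 ≤ ((Walk.cons hadj q).support.tail.count u) :=
          List.duplicate_iff_two_le_count.mp hdup
        have humem : u ∈ (Walk.cons hadj q).support := List.mem_of_mem_tail hdup.mem
        set w : G.Walk v v := Walk.cons hadj q with hw
        set wr : G.Walk u u := w.rotate u humem with hwr
        have hperm : List.Perm wr.support.tail w.support.tail := (w.support_rotate u humem).perm
        have hcount' : 2 ≤ wr.support.tail.count u := by
          rw [hperm.count_eq]; exact hcount
        have hsign : walkSign σ wr = walkSign σ w := walkSign_rotate w humem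
        have hlenr : wr.length = w.length := by
          have h1 := ((w.rotate_edges u humem).perm).length_eq
          rwa [Walk.length_edges, Walk.length_edges] at h1
        have hsuppr : ∀ z ∈ wr.support, z ∈ X := by
          intro z hz
          rw [wr.support_eq_cons, List.mem_cons] at hz
          rcases hz with rfl | hz
          · exact hsupp z humem
          · exact hsupp z (List.mem_of_mem_tail (hperm.mem_iff.mp hz))
        obtain ⟨c1, c2, hsum, h1, h2, hmul, hs1, hs2⟩ := split_closed_walk (σ := σ) wr hcount'
        have e1 : walkSign σ c1 = 1 := by
          apply ih c1 (by omega) (fun z hz => hsuppr z (hs1 z hz))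
        have e2 : walkSign σ c2 = 1 := by
          apply ih c2 (by omega) (fun z hz => hsuppr z (hs2 z hz))
        rw [← hsign, ← hmul, e1, e2, mul_one]

end Aux

section Main

open SimpleGraph.Walk

variable {G : SimpleGraph V} {σ : Sym2 V → ℤˣ}

private lemma units_solve : ∀ x y z : ℤˣ, x * (z * y) = 1 → z = x * y := by decide

lemma colorable_of_balancedColorable {k : ℕ}
    (h : BalancedColorable G σ k) : (negSubgraph G σ).Colorable (2 * k) := by
  classical
  obtain ⟨f, hf⟩ := h
  let G' : SimpleGraph V :=
    { Adj := fun a b => G.Adj a b ∧ f a = f b,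
      symm := ⟨fun a b hab => ⟨hab.1.symm, hab.2.symm⟩⟩,
      loopless := ⟨fun a ha => G.loopless.irrefl a ha.1⟩ }
  have hle : G' ≤ G := fun a b hab => hab.1
  have hconst : ∀ {a b : V} (p : G'.Walk a b), ∀ u ∈ p.support, f u = f b := by
    intro a b p
    induction p with
    | nil => intro u hu; rw [Walk.support_nil, List.mem_singleton] at hu; rw [hu]
    | @cons a c b h q ih =>
      intro u hu
      rw [Walk.support_cons, List.mem_cons] at hu
      rcases hu with rfl | hu
      · rw [h.2]
        exact ih c (Walk.start_mem_support q)
      · exact ih u hu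
  let root : V → V := fun v => Quot.out (G'.connectedComponentMk v)
  have hreach : ∀ v, G'.Reachable (root v) v := by
    intro v
    apply SimpleGraph.ConnectedComponent.exact
    exact Quot.out_eq _
  have hrooteq : ∀ {a b : V}, G'.Adj a b → root a = root b := by
    intro a b hab
    show Quot.out _ = Quot.out _
    rw [SimpleGraph.ConnectedComponent.sound hab.reachable]
  let wtr : ∀ v : V, G'.Walk (root v) v := fun v => (hreach v).some
  let η : V → ℤˣ := fun v => walkSign σ (wtr v)
  have key : ∀ {a b : V}, G'.Adj a b → σ s(a, b) = η a * η b := by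
    intro a b hab
    have hr : root b = root a := (hrooteq hab).symm
    let W : G'.Walk (root a) (root a) :=
      (wtr a).append (Walk.cons hab ((wtr b).reverse.copy rfl hr))
    have hsupp : ∀ u ∈ W.support, u ∈ {x : V | f x = f b} := by
      intro u hu
      rw [Walk.mem_support_append_iff] at hu
      rcases hu with hu | hu
      · have := hconst (wtr a) u hu
        rw [Set.mem_setOf_eq, this, hab.2]
      · rw [Walk.support_cons, List.mem_cons] at hu
        rcases hu with rfl | hu
        · exact hab.2
        · rw [Walk.support_copy, Walk.support_reverse, List.mem_reverse] at hu
          exact hconst (wtr b) u hu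
    have h1 : walkSign σ (W.mapLe hle) = 1 := by
      apply balanced_closedWalk (hf (f b)) (W.mapLe hle).length _ le_rfl
      intro u hu
      rw [support_mapLe] at hu
      exact hsupp u hu
    rw [walkSign_mapLe] at h1
    have hW : walkSign σ W = η a * (σ s(a, b) * η b) := by
      show walkSign σ ((wtr a).append (Walk.cons hab ((wtr b).reverse.copy rfl hr)))
        = η a * (σ s(a, b) * η b)
      rw [walkSign_append, walkSign_cons, walkSign_copy, walkSign_reverse]
    rw [hW] at h1
    exact units_solve _ _ _ h1
  have C : (negSubgraph G σ).Coloring (Fin k × Bool) := by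
    refine SimpleGraph.Coloring.mk (fun v => (f v, η v = 1)) ?_
    intro a b hab hEq
    have hfab : f a = f b := congrArg Prod.fst hEq
    have hηab : η a = η b := by
      have := congrArg Prod.snd hEq
      simp only [decide_eq_decide] at this
      rcases Int.units_eq_one_or (η a) with h1 | h1 <;>
        rcases Int.units_eq_one_or (η b) with h2 | h2 <;> simp [h1, h2] at this ⊢
    have hAdj : G'.Adj a b := ⟨hab.1, hfab⟩
    have := key hAdj
    rw [hab.2, hηab, Int.units_mul_self] at this
    exact absurd this (by decide)
  have := C.colorable
  have hcard : Fintype.card (Fin k × Bool) = 2 * k := by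
    simp [Fintype.card_prod, Nat.mul_comm]
  rwa [hcard] at this

end Main

section Thm

open SimpleGraph.Walk

variable {G : SimpleGraph V} {σ : Sym2 V → ℤˣ}

lemma balancedColorable_card [Fintype V] (G : SimpleGraph V) (σ : Sym2 V → ℤˣ) :
    BalancedColorable G σ (Fintype.card V) := by
  refine ⟨Fintype.equivFin V, ?_⟩
  intro i v w hcyc hsupp
  exfalso
  cases w with
  | nil => exact hcyc.ne_nil rfl
  | @cons _ x _ h q =>
    have hv : (Fintype.equivFin V) v = i := hsupp v (Walk.start_mem_support _)
    have hx : (Fintype.equivFin V) x = i := by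
      apply hsupp x
      rw [Walk.support_cons, List.mem_cons]
      exact Or.inr (Walk.start_mem_support q)
    exact h.ne ((Fintype.equivFin V).injective (hv.trans hx.symm))

lemma balancedColorable_of_colorable {m : ℕ}
    (hc : (negSubgraph G σ).Colorable m) : BalancedColorable G σ m := by
  obtain ⟨C⟩ := hc
  refine ⟨C, ?_⟩
  intro i v w _ hsupp
  apply List.prod_eq_one
  intro x hx
  rw [List.mem_map] at hx
  obtain ⟨e, he, rfl⟩ := hx
  induction e using Sym2.ind with
  | _ a b =>
    rcases Int.units_eq_one_or (σ s(a, b)) with h1 | h1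
    · exact h1
    · exfalso
      have hAdj : (negSubgraph G σ).Adj a b := ⟨w.adj_of_mem_edges he, h1⟩
      have ha : C a = i := hsupp a (w.fst_mem_support_of_mem_edges he)
      have hb : C b = i := hsupp b (w.snd_mem_support_of_mem_edges he)
      exact C.valid hAdj (ha.trans hb.symm)

end Thm

/-- χ_b(G,σ) ≤ χ((G,σ)⁻) ≤ 2 χ_b(G,σ). -/
theorem stmt2 {V : Type*} [Fintype V] (G : SimpleGraph V) (σ : Sym2 V → ℤˣ) :
    (balancedChromNum G σ : ℕ∞) ≤ (negSubgraph G σ).chromaticNumber ∧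
      (negSubgraph G σ).chromaticNumber ≤ 2 * (balancedChromNum G σ : ℕ∞) := by
  classical
  constructor
  · have hne : (negSubgraph G σ).chromaticNumber ≠ ⊤ := by
      rw [SimpleGraph.chromaticNumber_ne_top_iff_exists]
      exact ⟨_, (negSubgraph G σ).colorable_of_fintype⟩
    set m := ENat.toNat (negSubgraph G σ).chromaticNumber with hm
    have hχ : (negSubgraph G σ).chromaticNumber = (m : ℕ∞) := (ENat.coe_toNat hne).symm
    rw [hχ, Nat.cast_le]
    apply Nat.sInf_le
    exact balancedColorable_of_colorable ((negSubgraph G σ).colorable_chromaticNumber_of_fintype)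
  · have hmem : BalancedColorable G σ (balancedChromNum G σ) :=
      Nat.sInf_mem (s := {n | BalancedColorable G σ n})
        ⟨Fintype.card V, balancedColorable_card G σ⟩
    have hc := colorable_of_balancedColorable hmem
    calc (negSubgraph G σ).chromaticNumber ≤ ((2 * balancedChromNum G σ : ℕ) : ℕ∞) :=
          hc.chromaticNumber_le
      _ = 2 * (balancedChromNum G σ : ℕ∞) := by push_cast; ring


end SignedGS
end

section
/- Let F be a linear forest consisting of l ≥ 1 disjoint paths, each having at most k vertices (k ≥ 2). Then every signed graph (G, σ) in which every triangle is positive (equivalently, with no induced subgraph switching equivalent to the all-negative triangle (K_3, −)) and whose underlying graph contains no induced copy of F satisfies χ_b(G, σ) < 2^k + (l − 1)·k. -/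
open SimpleGraph

namespace SignedGS

variable {V : Type*}

section Aux

variable {G : SimpleGraph V} {σ : Sym2 V → ℤˣ}

lemma bal_mono {A B : Set V} (h : A ⊆ B) (hB : IsBalancedSet G σ B) :
    IsBalancedSet G σ A :=
  fun _ w hw hsup => hB w hw (fun u hu => h (hsup u hu))

lemma bal_empty : IsBalancedSet G σ (∅ : Set V) := by
  intro v w _ hsup
  exact absurd (hsup v w.start_mem_support) (by simp)

lemma walkSign_switch {X : Set V} (η : V → ℤˣ)
    (hη : ∀ x y, G.Adj x y → x ∈ X → y ∈ X → σ s(x, y) = η x * η y) :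
    ∀ {a b : V} (w : G.Walk a b), (∀ z ∈ w.support, z ∈ X) → walkSign σ w = η a * η b := by
  intro a b w
  induction w with
  | nil =>
    intro _
    simp [walkSign, (Int.units_mul_self _).symm]
  | @cons a c b h p ih =>
    intro hs
    have ha : a ∈ X := hs a (Walk.start_mem_support _)
    have hc : c ∈ X := hs c (by
      rw [Walk.support_cons]; exact List.mem_cons_of_mem _ (Walk.start_mem_support p))
    have hrec := ih (fun z hz => hs z (by rw [Walk.support_cons]; exact List.mem_cons_of_mem _ hz))
    have : walkSign σ (Walk.cons h p) = σ s(a, c) * walkSign σ p := by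
      simp [walkSign, Walk.edges_cons]
    rw [this, hrec, hη a c h ha hc, mul_assoc, ← mul_assoc (η c), Int.units_mul_self, one_mul]

lemma bal_of_switch {X : Set V} (η : V → ℤˣ)
    (hη : ∀ x y, G.Adj x y → x ∈ X → y ∈ X → σ s(x, y) = η x * η y) :
    IsBalancedSet G σ X := by
  intro v w _ hsup
  rw [walkSign_switch η hη w hsup, Int.units_mul_self]

def Nb (G : SimpleGraph V) (u : V) : Set V := {z | z = u ∨ G.Adj u z}

lemma bal_nb (h1 : AllTrianglesPositive G σ) (u : V) : IsBalancedSet G σ (Nb G u) := by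
  classical
  apply bal_of_switch (fun z => if z = u then 1 else σ s(u, z))
  intro x y hxy hx hy
  by_cases hxu : x = u
  · have hyu : y ≠ u := by
      rintro rfl
      rw [hxu] at hxy
      exact G.irrefl hxy
    rw [if_pos hxu, if_neg hyu, one_mul, hxu]
  · by_cases hyu : y = u
    · rw [if_neg hxu, if_pos hyu, mul_one, hyu, Sym2.eq_swap]
    · rw [if_neg hxu, if_neg hyu]
      have h3 : G.Adj u x := hx.resolve_left hxu
      have h4 : G.Adj u y := hy.resolve_left hyu
      have ht := h1 u x y h3 hxy h4
      rcases Int.units_eq_one_or (σ s(u, x)) with h | h <;>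
        rcases Int.units_eq_one_or (σ s(u, y)) with h' | h' <;>
        rcases Int.units_eq_one_or (σ s(x, y)) with h'' | h'' <;>
        rw [h, h', h''] at ht ⊢ <;> revert ht <;> decide

lemma colOn_mono_set {X Y : Set V} {n : ℕ} (h : X ⊆ Y)
    (hY : BalancedColorableOn G σ Y n) : BalancedColorableOn G σ X n := by
  obtain ⟨f, hf⟩ := hY
  refine ⟨f, fun i => ?_⟩
  refine bal_mono ?_ (hf i)
  intro v hv
  exact ⟨h hv.1, hv.2⟩

lemma colOn_mono_nat {X : Set V} {a b : ℕ} (h : a ≤ b)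
    (hX : BalancedColorableOn G σ X a) : BalancedColorableOn G σ X b := by
  obtain ⟨f, hf⟩ := hX
  refine ⟨fun v => Fin.castLE h (f v), fun i => ?_⟩
  by_cases hi : (i : ℕ) < a
  · refine bal_mono ?_ (hf ⟨i, hi⟩)
    intro v hv
    refine ⟨hv.1, Fin.ext ?_⟩
    have := congrArg Fin.val hv.2
    simpa using this
  · refine bal_mono ?_ bal_empty
    intro v hv
    exfalso
    have := congrArg Fin.val hv.2
    simp at this
    have h2 := (f v).isLt
    omega

lemma colOn_empty {n : ℕ} (h : 1 ≤ n) : BalancedColorableOn G σ (∅ : Set V) n := by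
  refine ⟨fun _ => ⟨0, h⟩, fun _ => ?_⟩
  refine bal_mono ?_ bal_empty
  intro v hv
  exact hv.1

lemma colOn_of_bal {X : Set V} (h : IsBalancedSet G σ X) : BalancedColorableOn G σ X 1 := by
  refine ⟨fun _ => 0, fun _ => ?_⟩
  refine bal_mono ?_ h
  intro v hv
  exact hv.1

lemma colOn_union {A B : Set V} {a b : ℕ} (hA : BalancedColorableOn G σ A a)
    (hB : BalancedColorableOn G σ B b) : BalancedColorableOn G σ (A ∪ B) (a + b) := by
  classical
  obtain ⟨f, hf⟩ := hA
  obtain ⟨g, hg⟩ := hB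
  refine ⟨fun v => if v ∈ A then Fin.castAdd b (f v) else Fin.natAdd a (g v), fun i => ?_⟩
  by_cases hi : (i : ℕ) < a
  · refine bal_mono ?_ (hf ⟨i, hi⟩)
    intro v hv
    obtain ⟨hvAB, hvi⟩ := hv
    by_cases hvA : v ∈ A
    · refine ⟨hvA, Fin.ext ?_⟩
      have := congrArg Fin.val hvi
      simpa [hvA] using this
    · exfalso
      have := congrArg Fin.val hvi
      simp [hvA] at this
      omega
  · refine bal_mono ?_ (hg ⟨(i : ℕ) - a, by have := i.isLt; omega⟩)
    intro v hv
    obtain ⟨hvAB, hvi⟩ := hv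
    by_cases hvA : v ∈ A
    · exfalso
      have := congrArg Fin.val hvi
      simp [hvA] at this
      have h2 := (f v).isLt
      omega
    · refine ⟨hvAB.resolve_left hvA, Fin.ext ?_⟩
      have := congrArg Fin.val hvi
      simp [hvA] at this
      simp
      omega

lemma colOn_iUnion : ∀ (t : ℕ) (A : Fin (t + 1) → Set V),
    (∀ i, IsBalancedSet G σ (A i)) →
    BalancedColorableOn G σ (⋃ i, A i) (t + 1) := by
  intro t
  induction t with
  | zero =>
    intro A hA
    refine colOn_mono_set ?_ (colOn_of_bal (hA 0))
    intro x hx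
    rw [Set.mem_iUnion] at hx
    obtain ⟨i, hi⟩ := hx
    rwa [Subsingleton.elim (0 : Fin 1) i]
  | succ t ih =>
    intro A hA
    have IH := ih (fun i => A i.castSucc) (fun i => hA _)
    have hu := colOn_union IH (colOn_of_bal (hA (Fin.last (t + 1))))
    refine colOn_mono_set ?_ hu
    intro x hx
    rw [Set.mem_iUnion] at hx
    obtain ⟨i, hi⟩ := hx
    rcases Fin.eq_castSucc_or_eq_last i with ⟨j, rfl⟩ | rfl
    · exact Or.inl (Set.mem_iUnion.2 ⟨j, hi⟩)
    · exact Or.inr hi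

lemma colOn_iUnion' (t : ℕ) (ht : 1 ≤ t) (A : Fin t → Set V)
    (hA : ∀ i, IsBalancedSet G σ (A i)) :
    BalancedColorableOn G σ (⋃ i, A i) t := by
  obtain ⟨s, rfl⟩ : ∃ s, t = s + 1 := ⟨t - 1, by omega⟩
  exact colOn_iUnion s A hA

lemma colOn_split (h1 : AllTrianglesPositive G σ) {C : Set V} (u : V) {n : ℕ}
    (h : BalancedColorableOn G σ (C \ Nb G u) n) : BalancedColorableOn G σ C (n + 1) := by
  have hbal : IsBalancedSet G σ (C ∩ Nb G u) :=
    bal_mono Set.inter_subset_right (bal_nb h1 u)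
  have h2 := colOn_union (colOn_of_bal hbal) h
  have h3 : C ⊆ (C ∩ Nb G u) ∪ (C \ Nb G u) := by
    intro x hx
    by_cases hxn : x ∈ Nb G u
    · exact Or.inl ⟨hx, hxn⟩
    · exact Or.inr ⟨hx, hxn⟩
  have h4 := colOn_mono_set h3 h2
  rwa [Nat.add_comm] at h4

def ReachIn (G : SimpleGraph V) (S : Set V) (x y : V) : Prop :=
  ∃ w : G.Walk x y, ∀ z ∈ w.support, z ∈ S

def compo (G : SimpleGraph V) (S : Set V) (x : V) : Set V := {y | ReachIn G S x y}

lemma ReachIn.mem_left {S : Set V} {x y : V} (h : ReachIn G S x y) : x ∈ S := by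
  obtain ⟨w, hw⟩ := h
  exact hw x w.start_mem_support

lemma ReachIn.mem_right {S : Set V} {x y : V} (h : ReachIn G S x y) : y ∈ S := by
  obtain ⟨w, hw⟩ := h
  exact hw y w.end_mem_support

lemma ReachIn.symm {S : Set V} {x y : V} (h : ReachIn G S x y) : ReachIn G S y x := by
  obtain ⟨w, hw⟩ := h
  exact ⟨w.reverse, fun z hz => hw z (by rwa [Walk.support_reverse, List.mem_reverse] at hz)⟩

lemma ReachIn.trans {S : Set V} {x y z : V} (h : ReachIn G S x y) (h' : ReachIn G S y z) :
    ReachIn G S x z := by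
  obtain ⟨w, hw⟩ := h
  obtain ⟨w', hw'⟩ := h'
  exact ⟨w.append w', fun q hq => by
    rw [Walk.mem_support_append_iff] at hq
    exact hq.elim (hw q) (hw' q)⟩

lemma compo_subset {S : Set V} {x : V} : compo G S x ⊆ S := fun _ hy => hy.mem_right

lemma mem_compo_self {S : Set V} {x : V} (hx : x ∈ S) : x ∈ compo G S x :=
  ⟨Walk.nil, by intro z hz; simp only [Walk.support_nil, List.mem_singleton] at hz; rwa [hz]⟩

lemma reach_of_mem_support {S : Set V} {x y z : V} {w : G.Walk x y}
    (hw : ∀ q ∈ w.support, q ∈ S) (hz : z ∈ w.support) : ReachIn G S x z := by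
  classical
  exact ⟨w.takeUntil z hz, fun q hq => hw q (Walk.support_takeUntil_subset w hz hq)⟩

lemma compo_reach {S : Set V} {x y : V} (hy : y ∈ compo G S x) :
    ReachIn G (compo G S x) x y := by
  obtain ⟨w, hw⟩ := hy
  exact ⟨w, fun z hz => reach_of_mem_support hw hz⟩

lemma compo_connected {S : Set V} {x a b : V} (ha : a ∈ compo G S x) (hb : b ∈ compo G S x) :
    ReachIn G (compo G S x) a b :=
  (compo_reach ha).symm.trans (compo_reach hb)

lemma compo_eq {S : Set V} {x y : V} (hxy : ReachIn G S x y) : compo G S x = compo G S y :=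
  Set.ext fun _ => ⟨fun hz => hxy.symm.trans hz, fun hz => hxy.trans hz⟩

lemma min'_congr [LinearOrder V] {s t : Finset V} (h : s = t) (hs : s.Nonempty) :
    s.min' hs = t.min' (h ▸ hs) := by subst h; rfl

lemma glue [Fintype V] {S : Set V} {n : ℕ} (hS : S.Nonempty)
    (h : ∀ x ∈ S, BalancedColorableOn G σ (compo G S x) n) :
    BalancedColorableOn G σ S n := by
  classical
  letI : LinearOrder V := LinearOrder.lift' (Fintype.equivFin V) (Equiv.injective _)
  obtain ⟨x₀, hx₀⟩ := hS
  obtain ⟨f₀, _⟩ := h x₀ hx₀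
  set F : V → V → Fin n := fun x => if hx : x ∈ S then (h x hx).choose else f₀ with hF
  have hFspec : ∀ (x : V) (hx : x ∈ S) (i : Fin n),
      IsBalancedSet G σ {v | v ∈ compo G S x ∧ F x v = i} := by
    intro x hx i
    have hs := (h x hx).choose_spec i
    simp only [hF, dif_pos hx]
    exact hs
  have hfin : ∀ v : V, (compo G S v).Finite := fun v => Set.toFinite _
  set rep : V → V := fun v =>
    if hv : v ∈ S then (hfin v).toFinset.min'
      ⟨v, by rw [Set.Finite.mem_toFinset]; exact mem_compo_self hv⟩
    else v with hrep
  have hrepEq : ∀ {x y : V}, x ∈ S → ReachIn G S x y → rep y = rep x := by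
    intro x y hx hxy
    have hy : y ∈ S := hxy.mem_right
    have hco : compo G S y = compo G S x := (compo_eq hxy).symm
    have hts : (hfin y).toFinset = (hfin x).toFinset := by
      apply Finset.ext
      intro q
      rw [Set.Finite.mem_toFinset, Set.Finite.mem_toFinset, hco]
    rw [hrep]
    simp only [dif_pos hx, dif_pos hy]
    exact min'_congr hts _
  have hrepMem : ∀ x ∈ S, rep x ∈ compo G S x := by
    intro x hx
    have : rep x = (hfin x).toFinset.min'
        ⟨x, by rw [Set.Finite.mem_toFinset]; exact mem_compo_self hx⟩ := by
      rw [hrep]; simp only [dif_pos hx]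
    rw [this]
    have := (hfin x).toFinset.min'_mem
      ⟨x, by rw [Set.Finite.mem_toFinset]; exact mem_compo_self hx⟩
    rwa [Set.Finite.mem_toFinset] at this
  refine ⟨fun v => F (rep v) v, fun i => ?_⟩
  intro a w hcyc hsup
  have haS : a ∈ S := (hsup a w.start_mem_support).1
  have hsupS : ∀ z ∈ w.support, z ∈ S := fun z hz => (hsup z hz).1
  have hsupR : ∀ z ∈ w.support, ReachIn G S a z := fun z hz => reach_of_mem_support hsupS hz
  have hram : rep a ∈ compo G S a := hrepMem a haS
  have hraR : ReachIn G S a (rep a) := hram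
  have hraS : rep a ∈ S := hraR.mem_right
  have hcomp : compo G S (rep a) = compo G S a := (compo_eq hraR).symm
  have hreps : ∀ z ∈ w.support, rep z = rep a := fun z hz => hrepEq haS (hsupR z hz)
  refine hFspec (rep a) hraS i w hcyc ?_
  intro z hz
  refine ⟨?_, ?_⟩
  · rw [hcomp]; exact hsupR z hz
  · have h5 : F (rep z) z = i := (hsup z hz).2
    rw [hreps z hz] at h5
    exact h5

lemma first_exit {P : V → Prop} :
    ∀ {a b : V} (w : G.Walk a b), ¬ P a → P b →
      ∃ (u v : V) (w' : G.Walk a u), G.Adj u v ∧ P v ∧ v ∈ w.support ∧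
        ∀ z ∈ w'.support, z ∈ w.support ∧ ¬ P z := by
  intro a b w
  induction w with
  | nil => intro h1 h2; exact absurd h2 h1
  | @cons a c b h p ih =>
    intro ha hb
    by_cases hc : P c
    · refine ⟨a, c, Walk.nil, h, hc, ?_, ?_⟩
      · rw [Walk.support_cons]; exact List.mem_cons_of_mem _ (Walk.start_mem_support p)
      · intro z hz
        simp only [Walk.support_nil, List.mem_singleton] at hz
        subst hz
        exact ⟨Walk.start_mem_support _, ha⟩
    · obtain ⟨u, v, w', huv, hv, hvmem, hw'⟩ := ih hc hb
      refine ⟨u, v, Walk.cons h w', huv, hv, ?_, ?_⟩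
      · rw [Walk.support_cons]; exact List.mem_cons_of_mem _ hvmem
      · intro z hz
        rw [Walk.support_cons] at hz
        rcases List.mem_cons.1 hz with rfl | hz'
        · exact ⟨Walk.start_mem_support _, ha⟩
        · obtain ⟨h1', h2'⟩ := hw' z hz'
          exact ⟨by rw [Walk.support_cons]; exact List.mem_cons_of_mem _ h1', h2'⟩

end Aux

section Gyarfas

variable {G : SimpleGraph V} {σ : Sym2 V → ℤˣ}

def IsPathEmb (G : SimpleGraph V) {t : ℕ} (c : Fin t → V) : Prop :=
  Function.Injective c ∧
    ∀ i j : Fin t, G.Adj (c i) (c j) ↔ ((i : ℕ) + 1 = (j : ℕ) ∨ (j : ℕ) + 1 = (i : ℕ))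

lemma isPathEmb_one (x : V) : IsPathEmb G (fun _ : Fin 1 => x) := by
  constructor
  · intro a b _
    exact Subsingleton.elim a b
  · intro i j
    have hi := i.isLt
    have hj := j.isLt
    constructor
    · intro h
      exact absurd h (G.irrefl)
    · intro h
      exfalso
      rcases h with h | h <;> omega

lemma isPathEmb_two {x v : V} (hadj : G.Adj x v) :
    IsPathEmb G (fun i : Fin 2 => if (i : ℕ) = 0 then x else v) := by
  have hne := G.ne_of_adj hadj
  constructor
  · intro i j hij
    have hi := i.isLt
    have hj := j.isLt
    by_cases h0 : (i : ℕ) = 0 <;> by_cases h0' : (j : ℕ) = 0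
    · exact Fin.ext (by omega)
    · simp only [if_pos h0, if_neg h0'] at hij
      exact absurd hij hne
    · simp only [if_neg h0, if_pos h0'] at hij
      exact absurd hij.symm hne
    · exact Fin.ext (by omega)
  · intro i j
    have hi := i.isLt
    have hj := j.isLt
    by_cases h0 : (i : ℕ) = 0 <;> by_cases h0' : (j : ℕ) = 0
    · simp only [if_pos h0, if_pos h0']
      constructor
      · intro h
        exact (G.irrefl h).elim
      · intro h
        exfalso
        rcases h with h | h <;> omega
    · simp only [if_pos h0, if_neg h0']
      constructor
      · intro _
        left
        omega
      · intro _
        exact hadj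
    · simp only [if_neg h0, if_pos h0']
      constructor
      · intro _
        right
        omega
      · intro _
        exact hadj.symm
    · simp only [if_neg h0, if_neg h0']
      constructor
      · intro h
        exact (G.irrefl h).elim
      · intro h
        exfalso
        rcases h with h | h <;> omega

lemma gyarfas [Fintype V] (h1 : AllTrianglesPositive G σ) (X : Set V) (mm : ℕ)
    (hP : ¬ ∃ c : Fin mm → V, (∀ i, c i ∈ X) ∧ IsPathEmb G c) :
    ∀ (d t : ℕ) (_ht : t + d = mm) (ht2 : 2 ≤ t) (c : Fin t → V), IsPathEmb G c →
      (∀ i, c i ∈ X) → ∀ (C : Set V), C ⊆ X →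
      (∀ y ∈ C, ∀ i, y ≠ c i) →
      (∀ y ∈ C, ∀ (i : Fin t), (i : ℕ) < t - 1 → ¬ G.Adj (c i) y) →
      (∀ a ∈ C, ∀ b ∈ C, ReachIn G C a b) →
      (∃ y ∈ C, G.Adj (c ⟨t - 1, by omega⟩) y) →
      BalancedColorableOn G σ C d := by
  intro d
  induction d with
  | zero =>
    intro t ht ht2 c hc hcX C _ _ _ _ _
    have htm : t = mm := by omega
    subst htm
    exact absurd ⟨c, hcX, hc⟩ hP
  | succ d ih =>
    intro t ht ht2 c hc hcX C hCX hCc hCN hconn hadj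
    classical
    set u := c ⟨t - 1, by omega⟩ with hu
    by_cases hCsub : ∀ y ∈ C, y ∈ Nb G u
    · refine colOn_mono_nat (by omega) (colOn_of_bal ?_)
      exact bal_mono (fun y hy => hCsub y hy) (bal_nb h1 u)
    · push_neg at hCsub
      obtain ⟨y₁, hy₁C, hy₁n⟩ := hCsub
      have hS'ne : (C \ Nb G u).Nonempty := ⟨y₁, hy₁C, hy₁n⟩
      obtain ⟨y₀, hy₀C, hy₀adj⟩ := hadj
      have hcomp : ∀ x ∈ C \ Nb G u, BalancedColorableOn G σ (compo G (C \ Nb G u) x) d := by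
        intro x hx
        obtain ⟨wxy, hwxy⟩ := hconn x hx.1 y₀ hy₀C
        obtain ⟨z, v, w', hzv, hvP, hvmem, hw'⟩ :=
          first_exit (P := fun q => q ∈ Nb G u) wxy hx.2 (Or.inr hy₀adj)
        have hvC : v ∈ C := hwxy v hvmem
        have hvne : v ≠ u := fun h => (hCc v hvC (⟨t - 1, by omega⟩ : Fin t)) (h.trans hu)
        have hvadj : G.Adj u v := hvP.resolve_left hvne
        have hzC' : z ∈ compo G (C \ Nb G u) x :=
          ⟨w', fun q hq => ⟨hwxy q (hw' q hq).1, (hw' q hq).2⟩⟩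
        set c' : Fin (t + 1) → V := fun i => if h : (i : ℕ) < t then c ⟨i, h⟩ else v with hc'
        have hc'cast : ∀ (i : Fin (t + 1)) (h : (i : ℕ) < t), c' i = c ⟨i, h⟩ := by
          intro i h
          simp only [hc']
          rw [dif_pos h]
        have hc'last : ∀ (i : Fin (t + 1)), ¬ ((i : ℕ) < t) → c' i = v := by
          intro i h
          simp only [hc']
          rw [dif_neg h]
        have hc'emb : IsPathEmb G c' := by
          constructor
          · intro i j hij
            by_cases hi : (i : ℕ) < t <;> by_cases hj : (j : ℕ) < t
            · rw [hc'cast i hi, hc'cast j hj] at hij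
              have := congrArg Fin.val (hc.1 hij)
              exact Fin.ext (by simpa using this)
            · rw [hc'cast i hi, hc'last j hj] at hij
              exact absurd hij.symm (hCc v hvC ⟨i, hi⟩)
            · rw [hc'last i hi, hc'cast j hj] at hij
              exact absurd hij (hCc v hvC ⟨j, hj⟩)
            · have hi2 := i.isLt
              have hj2 := j.isLt
              exact Fin.ext (by omega)
          · intro i j
            by_cases hi : (i : ℕ) < t <;> by_cases hj : (j : ℕ) < t
            · rw [hc'cast i hi, hc'cast j hj]
              exact hc.2 ⟨i, hi⟩ ⟨j, hj⟩
            · rw [hc'cast i hi, hc'last j hj]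
              have hjt : (j : ℕ) = t := by have := j.isLt; omega
              constructor
              · intro hadj'
                by_cases hit : (i : ℕ) = t - 1
                · left; omega
                · exfalso
                  exact hCN v hvC ⟨i, hi⟩ (show (i : ℕ) < t - 1 by omega) hadj'
              · rintro (h' | h')
                · have hcu : c ⟨(i : ℕ), hi⟩ = u := by
                    rw [hu]
                    exact congrArg c (Fin.ext (show (i : ℕ) = t - 1 by omega))
                  rw [hcu]
                  exact hvadj
                · exfalso; omega
            · rw [hc'last i hi, hc'cast j hj]
              have hit : (i : ℕ) = t := by have := i.isLt; omega
              constructor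
              · intro hadj'
                by_cases hjt : (j : ℕ) = t - 1
                · right; omega
                · exfalso
                  exact hCN v hvC ⟨j, hj⟩ (show (j : ℕ) < t - 1 by omega) hadj'.symm
              · rintro (h' | h')
                · exfalso; omega
                · have hcu : c ⟨(j : ℕ), hj⟩ = u := by
                    rw [hu]
                    exact congrArg c (Fin.ext (show (j : ℕ) = t - 1 by omega))
                  rw [hcu]
                  exact hvadj.symm
            · rw [hc'last i hi, hc'last j hj]
              constructor
              · intro h
                exact (G.irrefl h).elim
              · intro h
                have hi2 := i.isLt
                have hj2 := j.isLt
                exfalso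
                rcases h with h | h <;> omega
        have hc'X : ∀ i, c' i ∈ X := by
          intro i
          by_cases hi : (i : ℕ) < t
          · rw [hc'cast i hi]; exact hcX _
          · rw [hc'last i hi]; exact hCX hvC
        refine ih (t + 1) (by omega) (by omega) c' hc'emb hc'X
          (compo G (C \ Nb G u) x) ?_ ?_ ?_ ?_ ?_
        · intro y hy
          exact hCX (compo_subset hy).1
        · intro y hy i
          have hyS := compo_subset hy
          by_cases hi : (i : ℕ) < t
          · rw [hc'cast i hi]
            exact hCc y hyS.1 _
          · rw [hc'last i hi]
            intro h
            exact hyS.2 (h ▸ hvP)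
        · intro y hy i hilt
          have hyS := compo_subset hy
          have hit : (i : ℕ) < t := by omega
          rw [hc'cast i hit]
          by_cases hi1 : (i : ℕ) < t - 1
          · exact hCN y hyS.1 ⟨i, hit⟩ hi1
          · have hcu : c ⟨(i : ℕ), hit⟩ = u := by
              rw [hu]
              exact congrArg c (Fin.ext (show (i : ℕ) = t - 1 by omega))
            rw [hcu]
            intro h
            exact hyS.2 (Or.inr h)
        · intro a ha b hb
          exact compo_connected ha hb
        · refine ⟨z, hzC', ?_⟩
          have hlast : c' ⟨t + 1 - 1, by omega⟩ = v :=
            hc'last ⟨t + 1 - 1, by omega⟩ (show ¬(t + 1 - 1 < t) by omega)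
          rw [hlast]
          exact hzv.symm
      exact colOn_split h1 u (glue hS'ne hcomp)

lemma pathFree [Fintype V] (h1 : AllTrianglesPositive G σ) {n mm : ℕ} (hn : 1 ≤ n)
    (hm1 : 1 ≤ mm) (hmn : mm ≤ n + 1) (X : Set V)
    (hP : ¬ ∃ c : Fin mm → V, (∀ i, c i ∈ X) ∧ IsPathEmb G c) :
    BalancedColorableOn G σ X n := by
  classical
  by_cases hmm1 : mm = 1
  · have hXe : X = ∅ := by
      by_contra hne
      obtain ⟨x, hx⟩ := Set.nonempty_iff_ne_empty.2 hne
      apply hP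
      subst hmm1
      exact ⟨fun _ => x, fun _ => hx, isPathEmb_one x⟩
    rw [hXe]
    exact colOn_empty hn
  by_cases hmm2 : mm = 2
  · have hedge : ∀ a ∈ X, ∀ b ∈ X, ¬ G.Adj a b := by
      intro a ha b hb hab
      apply hP
      subst hmm2
      refine ⟨fun i : Fin 2 => if (i : ℕ) = 0 then a else b, fun i => ?_, isPathEmb_two hab⟩
      by_cases h0 : (i : ℕ) = 0
      · simp only [if_pos h0]; exact ha
      · simp only [if_neg h0]; exact hb
    have hbal : IsBalancedSet G σ X := by
      intro v w hcyc hsup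
      exfalso
      cases w with
      | nil => simpa using hcyc.ne_nil
      | cons h p =>
        refine hedge v (hsup v (Walk.start_mem_support _)) _ (hsup _ ?_) h
        rw [Walk.support_cons]
        exact List.mem_cons_of_mem _ (Walk.start_mem_support p)
    exact colOn_mono_nat hn (colOn_of_bal hbal)
  have hmm3 : 3 ≤ mm := by omega
  rcases X.eq_empty_or_nonempty with hXe | hXne
  · rw [hXe]
    exact colOn_empty hn
  refine colOn_mono_nat (show mm - 1 ≤ n by omega) ?_
  refine glue hXne ?_
  intro x hx
  have hKsub : compo G X x ⊆ X := compo_subset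
  have hxK : x ∈ compo G X x := mem_compo_self hx
  have hrest : BalancedColorableOn G σ (compo G X x \ Nb G x) (mm - 2) := by
    rcases (compo G X x \ Nb G x).eq_empty_or_nonempty with hSe | hSne
    · rw [hSe]
      exact colOn_empty (by omega)
    refine glue hSne ?_
    intro x' hx'
    obtain ⟨w, hw⟩ := compo_connected hx'.1 hxK
    obtain ⟨z, v, w', hzv, hvP, hvmem, hw'⟩ :=
      first_exit (P := fun q => q ∈ Nb G x) w hx'.2 (Or.inl rfl)
    have hvK : v ∈ compo G X x := hw v hvmem
    have hzC : z ∈ compo G (compo G X x \ Nb G x) x' :=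
      ⟨w', fun q hq => ⟨hw q (hw' q hq).1, (hw' q hq).2⟩⟩
    have hzNb : z ∉ Nb G x := (hw' z w'.end_mem_support).2
    have hvne : v ≠ x := by
      rintro rfl
      exact hzNb (Or.inr hzv.symm)
    have hvadj : G.Adj x v := hvP.resolve_left hvne
    have hc2X : ∀ i : Fin 2, (if ((i : ℕ) = 0) then x else v) ∈ X := by
      intro i
      by_cases h0 : (i : ℕ) = 0
      · rw [if_pos h0]; exact hx
      · rw [if_neg h0]; exact hKsub hvK
    refine gyarfas h1 X mm hP (mm - 2) 2 (by omega) le_rfl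
      (fun i : Fin 2 => if (i : ℕ) = 0 then x else v) (isPathEmb_two hvadj) hc2X
      (compo G (compo G X x \ Nb G x) x') ?_ ?_ ?_ ?_ ?_
    · intro y hy
      exact hKsub (compo_subset hy).1
    · intro y hy i
      have hyS := compo_subset hy
      by_cases h0 : (i : ℕ) = 0
      · simp only [if_pos h0]
        rintro rfl
        exact hyS.2 (Or.inl rfl)
      · simp only [if_neg h0]
        rintro rfl
        exact hyS.2 hvP
    · intro y hy i hilt
      have hyS := compo_subset hy
      have h0 : (i : ℕ) = 0 := by omega
      simp only [if_pos h0]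
      intro h
      exact hyS.2 (Or.inr h)
    · intro a ha b hb
      exact compo_connected ha hb
    · exact ⟨z, hzC, hzv.symm⟩
  have hsplit := colOn_split h1 x hrest
  exact colOn_mono_nat (by omega) hsplit

end Gyarfas

section Outer

variable {G : SimpleGraph V} {σ : Sym2 V → ℤˣ}

lemma linearForest_adj {l : ℕ} {m : Fin l → ℕ} (a b : Σ i : Fin l, Fin (m i)) :
    (linearForest l m).Adj a b ↔
      (a.1 = b.1 ∧ ((a.2 : ℕ) + 1 = (b.2 : ℕ) ∨ (b.2 : ℕ) + 1 = (a.2 : ℕ))) :=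
  Iff.rfl

lemma sigma_ext {l : ℕ} {m : Fin l → ℕ} {a b : Σ i : Fin l, Fin (m i)}
    (h1 : a.1 = b.1) (h2 : (a.2 : ℕ) = (b.2 : ℕ)) : a = b := by
  obtain ⟨i, j⟩ := a
  obtain ⟨i', j'⟩ := b
  dsimp at h1 h2
  subst h1
  exact congrArg (Sigma.mk i) (Fin.ext h2)

lemma outer [Fintype V] (h1 : AllTrianglesPositive G σ) {k : ℕ} (hk : 2 ≤ k) :
    ∀ (l : ℕ) (m : Fin (l + 1) → ℕ), (∀ i, 1 ≤ m i ∧ m i ≤ k) → ∀ X : Set V,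
      (¬ ∃ g : (Σ i : Fin (l + 1), Fin (m i)) → V, Function.Injective g ∧
        (∀ a, g a ∈ X) ∧ (∀ a b, G.Adj (g a) (g b) ↔ (linearForest (l + 1) m).Adj a b)) →
      BalancedColorableOn G σ X (k - 1 + l * k) := by
  intro l
  induction l with
  | zero =>
    intro m hm X h2
    have hP : ¬ ∃ c : Fin (m 0) → V, (∀ i, c i ∈ X) ∧ IsPathEmb G c := by
      rintro ⟨c, hcX, hcinj, hciff⟩
      apply h2
      refine ⟨fun a => c ⟨(a.2 : ℕ), ?_⟩, ?_, fun a => hcX _, ?_⟩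
      · have h := a.2.isLt
        have hv : (a.1 : ℕ) = 0 := by have := a.1.isLt; omega
        have he : a.1 = (0 : Fin (0 + 1)) := Fin.ext (by rw [hv]; rfl)
        exact lt_of_lt_of_eq h (congrArg m he)
      · intro a b hab
        have h1' : a.1 = b.1 := by
          have ha' := a.1.isLt
          have hb' := b.1.isLt
          exact Fin.ext (by omega)
        have h2' := congrArg Fin.val (hcinj hab)
        exact sigma_ext h1' (by simpa using h2')
      · intro a b
        rw [hciff, linearForest_adj]
        constructor
        · intro h
          refine ⟨?_, h⟩
          have ha' := a.1.isLt
          have hb' := b.1.isLt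
          exact Fin.ext (by omega)
        · intro h
          exact h.2
    have := pathFree h1 (show 1 ≤ k - 1 by omega) (hm 0).1
      (show m 0 ≤ (k - 1) + 1 by have := (hm 0).2; omega) X hP
    simpa using this
  | succ l ih =>
    intro m hm X h2
    by_cases hA : ∃ c : Fin (m (Fin.last (l + 1))) → V, (∀ i, c i ∈ X) ∧ IsPathEmb G c
    · obtain ⟨c, hcX, hcP⟩ := hA
      set NBS : Set V := ⋃ i : Fin (m (Fin.last (l + 1))), Nb G (c i) with hNBS
      have h2' : ¬ ∃ g' : (Σ i : Fin (l + 1), Fin (m i.castSucc)) → V, Function.Injective g' ∧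
          (∀ a, g' a ∈ X \ NBS) ∧
          (∀ a b, G.Adj (g' a) (g' b) ↔
            (linearForest (l + 1) (fun i => m i.castSucc)).Adj a b) := by
        rintro ⟨g', hg'inj, hg'X, hg'iff⟩
        apply h2
        have hcast : ∀ (a : Σ i : Fin (l + 2), Fin (m i)) (h : (a.1 : ℕ) < l + 1),
            (a.2 : ℕ) < m (Fin.castSucc ⟨(a.1 : ℕ), h⟩) := by
          intro a h
          have he : Fin.castSucc (⟨(a.1 : ℕ), h⟩ : Fin (l + 1)) = a.1 := Fin.ext rfl
          rw [he]
          exact a.2.isLt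
        have hlastm : ∀ (a : Σ i : Fin (l + 2), Fin (m i)), ¬ ((a.1 : ℕ) < l + 1) →
            (a.2 : ℕ) < m (Fin.last (l + 1)) := by
          intro a h
          have he : a.1 = Fin.last (l + 1) := Fin.ext (by have := a.1.isLt; simp; omega)
          rw [← he]
          exact a.2.isLt
        refine ⟨fun a => if h : (a.1 : ℕ) < l + 1
            then g' ⟨⟨(a.1 : ℕ), h⟩, ⟨(a.2 : ℕ), hcast a h⟩⟩
            else c ⟨(a.2 : ℕ), hlastm a h⟩, ?_, ?_, ?_⟩
        · intro a b hab
          by_cases ha : (a.1 : ℕ) < l + 1 <;> by_cases hb : (b.1 : ℕ) < l + 1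
          · simp only [dif_pos ha, dif_pos hb] at hab
            have := hg'inj hab
            have e1 := congrArg (fun x => (x.1 : ℕ)) this
            have e2 := congrArg (fun x => (x.2 : ℕ)) this
            dsimp at e1 e2
            exact sigma_ext (Fin.ext e1) e2
          · simp only [dif_pos ha, dif_neg hb] at hab
            exfalso
            have hmem := (hg'X ⟨⟨(a.1 : ℕ), ha⟩, ⟨(a.2 : ℕ), hcast a ha⟩⟩).2
            apply hmem
            rw [hab]
            exact Set.mem_iUnion.2 ⟨⟨(b.2 : ℕ), hlastm b hb⟩, Or.inl rfl⟩
          · simp only [dif_neg ha, dif_pos hb] at hab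
            exfalso
            have hmem := (hg'X ⟨⟨(b.1 : ℕ), hb⟩, ⟨(b.2 : ℕ), hcast b hb⟩⟩).2
            apply hmem
            rw [← hab]
            exact Set.mem_iUnion.2 ⟨⟨(a.2 : ℕ), hlastm a ha⟩, Or.inl rfl⟩
          · simp only [dif_neg ha, dif_neg hb] at hab
            have := congrArg Fin.val (hcP.1 hab)
            refine sigma_ext ?_ (by simpa using this)
            have h1' := a.1.isLt
            have h2' := b.1.isLt
            exact Fin.ext (by omega)
        · intro a
          by_cases ha : (a.1 : ℕ) < l + 1
          · simp only [dif_pos ha]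
            exact (hg'X _).1
          · simp only [dif_neg ha]
            exact hcX _
        · intro a b
          by_cases ha : (a.1 : ℕ) < l + 1 <;> by_cases hb : (b.1 : ℕ) < l + 1
          · simp only [dif_pos ha, dif_pos hb]
            rw [hg'iff, linearForest_adj, linearForest_adj]
            constructor
            · rintro ⟨e1, e2⟩
              have e1' := congrArg Fin.val e1
              dsimp at e1' e2
              exact ⟨Fin.ext e1', e2⟩
            · rintro ⟨e1, e2⟩
              have e1' := congrArg Fin.val e1
              exact ⟨Fin.ext e1', e2⟩
          · simp only [dif_pos ha, dif_neg hb]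
            rw [linearForest_adj]
            constructor
            · intro hadj
              exfalso
              have hmem := (hg'X ⟨⟨(a.1 : ℕ), ha⟩, ⟨(a.2 : ℕ), hcast a ha⟩⟩).2
              apply hmem
              exact Set.mem_iUnion.2 ⟨⟨(b.2 : ℕ), hlastm b hb⟩, Or.inr hadj.symm⟩
            · rintro ⟨e1, -⟩
              have := congrArg Fin.val e1
              have h1' := b.1.isLt
              exact absurd this (by omega)
          · simp only [dif_neg ha, dif_pos hb]
            rw [linearForest_adj]
            constructor
            · intro hadj
              exfalso
              have hmem := (hg'X ⟨⟨(b.1 : ℕ), hb⟩, ⟨(b.2 : ℕ), hcast b hb⟩⟩).2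
              apply hmem
              exact Set.mem_iUnion.2 ⟨⟨(a.2 : ℕ), hlastm a ha⟩, Or.inr hadj⟩
            · rintro ⟨e1, -⟩
              have := congrArg Fin.val e1
              have h1' := a.1.isLt
              exact absurd this (by omega)
          · simp only [dif_neg ha, dif_neg hb]
            rw [hcP.2, linearForest_adj]
            have he : a.1 = b.1 := by
              have h1' := a.1.isLt
              have h2' := b.1.isLt
              exact Fin.ext (by omega)
            constructor
            · intro h
              exact ⟨he, h⟩
            · intro h
              exact h.2
      have hcol' := ih (fun i => m i.castSucc) (fun i => hm _) (X \ NBS) h2'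
      have hcolNb : BalancedColorableOn G σ NBS (m (Fin.last (l + 1))) := by
        rw [hNBS]
        exact colOn_iUnion' _ (hm _).1 _ (fun i => bal_nb h1 (c i))
      have hcolA : BalancedColorableOn G σ (X ∩ NBS) k :=
        colOn_mono_nat (hm (Fin.last (l + 1))).2 (colOn_mono_set Set.inter_subset_right hcolNb)
      have hcolU := colOn_union hcolA hcol'
      have hsub : X ⊆ (X ∩ NBS) ∪ (X \ NBS) := by
        intro q hq
        by_cases hqn : q ∈ NBS
        · exact Or.inl ⟨hq, hqn⟩
        · exact Or.inr ⟨hq, hqn⟩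
      have hfin := colOn_mono_set hsub hcolU
      have harith : k + (k - 1 + l * k) = k - 1 + (l + 1) * k := by
        rw [Nat.succ_mul]
        omega
      rw [← harith]
      exact hfin
    · refine colOn_mono_nat (show k - 1 ≤ k - 1 + (l + 1) * k by omega) ?_
      exact pathFree h1 (show 1 ≤ k - 1 by omega) (hm _).1
        (show m (Fin.last (l + 1)) ≤ (k - 1) + 1 by have := (hm (Fin.last (l + 1))).2; omega) X hA

end Outer

/-- triangle-positive signed graphs with no induced copy of a linear
forest of l paths, each on at most k vertices, have χ_b < 2^k + (l−1)k. -/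
theorem stmt12 (l k : ℕ) (hl : 1 ≤ l) (hk : 2 ≤ k) (m : Fin l → ℕ)
    (hm : ∀ i, 1 ≤ m i ∧ m i ≤ k)
    {V : Type*} [Fintype V] (G : SimpleGraph V) (σ : Sym2 V → ℤˣ)
    (h1 : AllTrianglesPositive G σ)
    (h2 : ¬ HasInducedCopy (linearForest l m) G) :
    balancedChromNum G σ < 2 ^ k + (l - 1) * k := by
  obtain ⟨l', rfl⟩ : ∃ l', l = l' + 1 := ⟨l - 1, by omega⟩
  have h2' : ¬ ∃ g : (Σ i : Fin (l' + 1), Fin (m i)) → V, Function.Injective g ∧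
      (∀ a, g a ∈ (Set.univ : Set V)) ∧
      (∀ a b, G.Adj (g a) (g b) ↔ (linearForest (l' + 1) m).Adj a b) := by
    rintro ⟨g, hinj, -, hiff⟩
    exact h2 ⟨⟨g, hinj⟩, hiff⟩
  have hcol := outer h1 hk l' m hm Set.univ h2'
  obtain ⟨f, hf⟩ := hcol
  have hBC : BalancedColorable G σ (k - 1 + l' * k) := by
    refine ⟨f, fun i => ?_⟩
    refine bal_mono ?_ (hf i)
    intro v hv
    exact ⟨Set.mem_univ v, hv⟩
  have hle : balancedChromNum G σ ≤ k - 1 + l' * k := Nat.sInf_le hBC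
  have hkk : k < 2 ^ k := Nat.lt_two_pow_self
  have hlt : k - 1 + l' * k < 2 ^ k + l' * k :=
    Nat.add_lt_add_right (Nat.lt_of_le_of_lt (Nat.sub_le k 1) hkk) (l' * k)
  have hfinal : balancedChromNum G σ < 2 ^ k + l' * k := Nat.lt_of_le_of_lt hle hlt
  simpa using hfinal

end SignedGS
end

section
/- Let (G, σ) be a signed graph whose underlying graph is the full join G_1 ⋈ G_2 of two vertex-disjoint graphs, with no triangle whose three edges are all negative and no four vertices inducing a copy of (K_4, M), the complete graph on 4 vertices whose negative edges form a perfect matching. If each of the signed subgraphs induced on V(G_1) and on V(G_2) contains a negative edge, then the spanning subgraph (G, σ)⁻ formed by the negative edges of (G, σ) has chromatic number at most 6, and hence χ_b(G, σ) ≤ 6. -/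
open SimpleGraph

namespace SignedGS

variable {V : Type*}

/-- in a full join with no all-negative triangle and no (K_4,M) and a
negative edge on each side, the negative subgraph is 6-colorable and χ_b ≤ 6. -/
theorem stmt15 {W1 W2 : Type*} [Fintype W1] [Fintype W2]
    (G1 : SimpleGraph W1) (G2 : SimpleGraph W2) (σ : Sym2 (W1 ⊕ W2) → ℤˣ)
    (h1 : ¬ HasNegTriangle (fullJoin G1 G2) σ)
    (h2 : ¬ HasK4M (fullJoin G1 G2) σ)
    (h3 : ∃ x y : W1, G1.Adj x y ∧ σ s(Sum.inl x, Sum.inl y) = -1)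
    (h4 : ∃ x y : W2, G2.Adj x y ∧ σ s(Sum.inr x, Sum.inr y) = -1) :
    (negSubgraph (fullJoin G1 G2) σ).chromaticNumber ≤ 6 ∧
      balancedChromNum (fullJoin G1 G2) σ ≤ 6 := by
  -- Extract negative edges on each side.
  obtain ⟨x1, y1, hxy1, hs1⟩ := h3
  obtain ⟨x2, y2, hxy2, hs2⟩ := h4
  -- Define the 6-coloring.
  classical
  set G := fullJoin G1 G2 with hG
  let f : W1 ⊕ W2 → Fin 6 := fun v =>
    match v with
    | .inl x => if σ s(Sum.inl x, Sum.inr x2) = -1 then 0 else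
        if σ s(Sum.inl x, Sum.inr y2) = -1 then 1 else 2
    | .inr y => if σ s(Sum.inr y, Sum.inl x1) = -1 then 3 else
        if σ s(Sum.inr y, Sum.inl y1) = -1 then 4 else 5
  have hpm : ∀ u : ℤˣ, u ≠ -1 → u = 1 := by
    intro u hu; rcases Int.units_eq_one_or u with h | h
    · exact h
    · exact absurd h hu
  have key : ∀ u v, (negSubgraph G σ).Adj u v → f u ≠ f v := by
    rintro (a | a) (b | b) ⟨hadj, hneg⟩
    · -- both on side 1
      have hab : G1.Adj a b := hadj
      simp only [f]
      by_cases h1a : σ s(Sum.inl a, Sum.inr x2) = -1 <;>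
      by_cases h1b : σ s(Sum.inl b, Sum.inr x2) = -1 <;>
      by_cases h2a : σ s(Sum.inl a, Sum.inr y2) = -1 <;>
      by_cases h2b : σ s(Sum.inl b, Sum.inr y2) = -1 <;>
        simp only [h1a, h1b, h2a, h2b, if_true, if_false, if_pos, if_neg, not_false_iff] <;>
        first
        | decide
        | (exfalso
           first
           | exact h1 ⟨Sum.inl a, Sum.inl b, Sum.inr x2, hab, trivial, trivial, hneg, h1b, h1a⟩
           | exact h1 ⟨Sum.inl a, Sum.inl b, Sum.inr y2, hab, trivial, trivial, hneg, h2b, h2a⟩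
           | exact h2 ⟨Sum.inl a, Sum.inl b, Sum.inr x2, Sum.inr y2,
               (by simp [hab.ne]), (by simp), (by simp), (by simp), (by simp),
               (by simp [hxy2.ne]), hab, trivial, trivial, trivial, trivial, hxy2,
               hneg, hs2, hpm _ h1a, hpm _ h2a, hpm _ h1b, hpm _ h2b⟩)
    · -- cross edge: colors in {0,1,2} vs {3,4,5}
      simp only [f]
      by_cases h1a : σ s(Sum.inl a, Sum.inr x2) = -1 <;>
      by_cases h2a : σ s(Sum.inl a, Sum.inr y2) = -1 <;>
      by_cases h1b : σ s(Sum.inr b, Sum.inl x1) = -1 <;>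
      by_cases h2b : σ s(Sum.inr b, Sum.inl y1) = -1 <;>
        simp [h1a, h2a, h1b, h2b]
    · simp only [f]
      by_cases h1a : σ s(Sum.inr a, Sum.inl x1) = -1 <;>
      by_cases h2a : σ s(Sum.inr a, Sum.inl y1) = -1 <;>
      by_cases h1b : σ s(Sum.inl b, Sum.inr x2) = -1 <;>
      by_cases h2b : σ s(Sum.inl b, Sum.inr y2) = -1 <;>
        simp [h1a, h2a, h1b, h2b]
    · -- both on side 2
      have hab : G2.Adj a b := hadj
      simp only [f]
      by_cases h1a : σ s(Sum.inr a, Sum.inl x1) = -1 <;>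
      by_cases h1b : σ s(Sum.inr b, Sum.inl x1) = -1 <;>
      by_cases h2a : σ s(Sum.inr a, Sum.inl y1) = -1 <;>
      by_cases h2b : σ s(Sum.inr b, Sum.inl y1) = -1 <;>
        simp only [h1a, h1b, h2a, h2b, if_true, if_false, if_pos, if_neg, not_false_iff] <;>
        first
        | decide
        | (exfalso
           first
           | exact h1 ⟨Sum.inr a, Sum.inr b, Sum.inl x1, hab, trivial, trivial, hneg, h1b, h1a⟩
           | exact h1 ⟨Sum.inr a, Sum.inr b, Sum.inl y1, hab, trivial, trivial, hneg, h2b, h2a⟩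
           | exact h2 ⟨Sum.inr a, Sum.inr b, Sum.inl x1, Sum.inl y1,
               (by simp [hab.ne]), (by simp), (by simp), (by simp), (by simp),
               (by simp [hxy1.ne]), hab, trivial, trivial, trivial, trivial, hxy1,
               hneg, hs1, hpm _ h1a, hpm _ h2a, hpm _ h1b, hpm _ h2b⟩)
  constructor
  · exact (SimpleGraph.Coloring.mk f fun {u v} h => key u v h).colorable.chromaticNumber_le
  · apply Nat.sInf_le
    refine ⟨f, fun i v w hw hsupp => ?_⟩
    have hall : ∀ e ∈ w.edges, σ e = 1 := by
      intro e he
      induction e using Sym2.ind with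
      | _ a b =>
        have hadj : G.Adj a b := w.adj_of_mem_edges he
        have ha : a ∈ w.support := SimpleGraph.Walk.fst_mem_support_of_mem_edges w he
        have hb : b ∈ w.support := SimpleGraph.Walk.snd_mem_support_of_mem_edges w he
        have hfa : f a = i := hsupp a ha
        have hfb : f b = i := hsupp b hb
        by_contra hne
        have hσ : σ s(a, b) = -1 := by
          rcases Int.units_eq_one_or (σ s(a, b)) with h | h
          · exact absurd h hne
          · exact h
        exact key a b ⟨hadj, hσ⟩ (hfa.trans hfb.symm)
    unfold walkSign
    apply List.prod_eq_one
    intro u hu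
    obtain ⟨e, he, rfl⟩ := List.mem_map.mp hu
    exact hall e he


end SignedGS
end

section
/- There exists a signed graph (G, σ) such that: (i) no triangle of G has all three edges negative; (ii) no four vertices of G induce a copy of (K_4, M), the complete graph on 4 vertices whose negative edges form a perfect matching; (iii) G contains no induced path on 4 vertices; and (iv) the spanning subgraph (G, σ)⁻ formed by the negative edges of (G, σ) has chromatic number at least 6. -/
open SimpleGraph

namespace SignedGS

variable {V : Type*}

/-! ### Auxiliary construction for Statement 19 -/

/-- Adjacency of the 5-vertex blob: `C₅` (edges 01,12,23,34,40) plus chords 02 and 13. -/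
def s19bAdj : Fin 5 → Fin 5 → Bool :=
  ![![false, true, true, false, true],
    ![true, false, true, true, false],
    ![true, true, false, true, false],
    ![false, true, true, false, true],
    ![true, false, false, true, false]]

/-- Negative edges of the blob: the `C₅` (edges 01,12,23,34,40). -/
def s19bNeg : Fin 5 → Fin 5 → Bool :=
  ![![false, true, false, false, true],
    ![true, false, true, false, false],
    ![false, true, false, true, false],
    ![false, false, true, false, true],
    ![true, false, false, true, false]]

/-- The class of a blob vertex. -/
def s19cls : Fin 5 → Fin 3 := ![0, 1, 0, 1, 2]

/-- Cross negativity with alignment `r`. -/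
def s19cross (r : Fin 3) (k l : Fin 5) : Bool := s19cls l == s19cls k + r

/-- Number of left-side blobs. -/
abbrev s19N : ℕ := 6251

/-- Vertex type: left blobs indexed by `Fin s19N`, right blobs by pairs of indices. -/
abbrev s19V : Type := (Fin s19N × Fin 5) ⊕ ((Fin s19N × Fin s19N) × Fin 5)

/-- The alignment used between left blob `i` and right blob `j`. -/
def s19rank (i : Fin s19N) (j : Fin s19N × Fin s19N) : Fin 3 :=
  if i = j.1 then 1 else if i = j.2 then 2 else 0

/-- Adjacency: inside a blob according to `s19bAdj`; all cross pairs adjacent. -/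
def s19adj : s19V → s19V → Prop
  | .inl a, .inl b => a.1 = b.1 ∧ s19bAdj a.2 b.2 = true
  | .inr a, .inr b => a.1 = b.1 ∧ s19bAdj a.2 b.2 = true
  | _, _ => True

/-- Sign indicator (true = negative). -/
def s19sgn : s19V → s19V → Bool
  | .inl a, .inl b => s19bNeg a.2 b.2
  | .inr a, .inr b => s19bNeg a.2 b.2
  | .inl a, .inr b => s19cross (s19rank a.1 b.1) a.2 b.2
  | .inr b, .inl a => s19cross (s19rank a.1 b.1) a.2 b.2

lemma s19bAdj_symm : ∀ k l, s19bAdj k l = s19bAdj l k := by decide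
lemma s19bNeg_symm : ∀ k l, s19bNeg k l = s19bNeg l k := by decide
lemma s19bAdj_irrefl : ∀ k, s19bAdj k k = false := by decide
lemma s19bNeg_le_bAdj : ∀ k l, s19bNeg k l = true → s19bAdj k l = true := by decide

lemma s19sgn_symm : ∀ x y : s19V, s19sgn x y = s19sgn y x := by
  rintro (a | a) (b | b) <;> simp only [s19sgn] <;> rw [s19bNeg_symm]

/-- The underlying graph. -/
def s19G : SimpleGraph s19V where
  Adj := s19adj
  symm := by
    constructor
    rintro (a | a) (b | b) h <;> simp only [s19adj] at h ⊢ <;>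
      first
        | exact ⟨h.1.symm, (s19bAdj_symm _ _) ▸ h.2⟩
        | trivial
  loopless := by
    constructor
    rintro (a | a) ⟨-, h⟩ <;> rw [s19bAdj_irrefl] at h <;> exact Bool.false_ne_true h

/-- The signature. -/
def s19σ : Sym2 s19V → ℤˣ :=
  Sym2.lift ⟨fun x y => if s19sgn x y then -1 else 1, fun x y => by
    show (if s19sgn x y then (-1 : ℤˣ) else 1) = if s19sgn y x then -1 else 1
    rw [s19sgn_symm]⟩

lemma s19σ_mk (x y : s19V) : s19σ s(x, y) = if s19sgn x y then -1 else 1 := rfl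

lemma s19σ_neg_iff (x y : s19V) : s19σ s(x, y) = -1 ↔ s19sgn x y = true := by
  rw [s19σ_mk]
  rcases h : s19sgn x y <;> simp [h]

lemma s19σ_pos_iff (x y : s19V) : s19σ s(x, y) = 1 ↔ s19sgn x y = false := by
  rw [s19σ_mk]
  rcases h : s19sgn x y <;> simp [h]

/-! ### Finite checks (by `decide`) -/

lemma s19DP4 : ∀ k0 k1 k2 k3 : Fin 5, s19bAdj k0 k1 = true → s19bAdj k1 k2 = true →
    s19bAdj k2 k3 = true →
    (s19bAdj k0 k2 = true ∨ s19bAdj k0 k3 = true ∨ s19bAdj k1 k3 = true) := by decide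

lemma s19T3 : ∀ k1 k2 k3 : Fin 5, s19bNeg k1 k2 = true → s19bNeg k2 k3 = true →
    s19bNeg k1 k3 = true → False := by decide

lemma s19T21 : ∀ (r : Fin 3) (k1 k2 l : Fin 5), s19bNeg k1 k2 = true →
    s19cross r k1 l = true → s19cross r k2 l = true → False := by decide

lemma s19T12 : ∀ (r : Fin 3) (k l1 l2 : Fin 5), s19bNeg l1 l2 = true →
    s19cross r k l1 = true → s19cross r k l2 = true → False := by decide

lemma s19D40 : ∀ k1 k2 k3 k4 : Fin 5,
    s19bAdj k1 k3 = true → s19bAdj k1 k4 = true → s19bAdj k2 k3 = true →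
    s19bAdj k2 k4 = true →
    s19bNeg k1 k2 = true → s19bNeg k3 k4 = true → s19bNeg k1 k3 = false →
    s19bNeg k1 k4 = false → s19bNeg k2 k3 = false → s19bNeg k2 k4 = false → False := by decide

lemma s19D31 : ∀ (r : Fin 3) (k1 k2 k3 l : Fin 5),
    s19bAdj k1 k3 = true → s19bAdj k2 k3 = true →
    s19bNeg k1 k2 = true → s19cross r k3 l = true →
    s19cross r k1 l = false → s19cross r k2 l = false →
    s19bNeg k1 k3 = false → s19bNeg k2 k3 = false → False := by decide

lemma s19D13 : ∀ (r : Fin 3) (k l1 l2 l3 : Fin 5),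
    s19bAdj l1 l3 = true → s19bAdj l2 l3 = true →
    s19bNeg l1 l2 = true → s19cross r k l3 = true →
    s19cross r k l1 = false → s19cross r k l2 = false →
    s19bNeg l1 l3 = false → s19bNeg l2 l3 = false → False := by decide

lemma s19D22a : ∀ (r : Fin 3) (k1 k2 l1 l2 : Fin 5),
    s19bNeg k1 k2 = true → s19bNeg l1 l2 = true →
    s19cross r k1 l1 = false → s19cross r k1 l2 = false →
    s19cross r k2 l1 = false → s19cross r k2 l2 = false → False := by decide

lemma s19D22b : ∀ (r : Fin 3) (k1 k2 l1 l2 : Fin 5),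
    s19bAdj k1 k2 = true → s19bAdj l1 l2 = true →
    s19bNeg k1 k2 = false → s19bNeg l1 l2 = false →
    s19cross r k1 l1 = true → s19cross r k2 l2 = true →
    s19cross r k1 l2 = false → s19cross r k2 l1 = false → False := by decide

/-! ### No negative triangle, no (K4,M), no induced P4 -/

lemma s19_noNegTri (a b c : s19V) (hab : s19G.Adj a b) (hbc : s19G.Adj b c)
    (hac : s19G.Adj a c) (sab : s19sgn a b = true) (sbc : s19sgn b c = true)
    (sac : s19sgn a c = true) : False := by
  rcases a with ⟨ia, ka⟩ | ⟨ia, ka⟩ <;> rcases b with ⟨ib, kb⟩ | ⟨ib, kb⟩ <;>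
    rcases c with ⟨ic, kc⟩ | ⟨ic, kc⟩
  · exact s19T3 ka kb kc sab sbc sac
  · obtain ⟨rfl, -⟩ := hab
    exact s19T21 (s19rank ia ic) ka kb kc sab sac sbc
  · obtain ⟨rfl, -⟩ := hac
    exact s19T21 (s19rank ia ib) ka kc kb sac sab sbc
  · obtain ⟨rfl, -⟩ := hbc
    exact s19T12 (s19rank ia ib) ka kb kc sbc sab sac
  · obtain ⟨rfl, -⟩ := hbc
    exact s19T21 (s19rank ib ia) kb kc ka sbc sab sac
  · obtain ⟨rfl, -⟩ := hac
    exact s19T12 (s19rank ib ia) kb ka kc sac sab sbc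
  · obtain ⟨rfl, -⟩ := hab
    exact s19T12 (s19rank ic ia) kc ka kb sab sac sbc
  · exact s19T3 ka kb kc sab sbc sac

lemma s19_noK4M (a b c d : s19V)
    (hab : s19G.Adj a b) (hac : s19G.Adj a c) (had : s19G.Adj a d)
    (hbc : s19G.Adj b c) (hbd : s19G.Adj b d) (hcd : s19G.Adj c d)
    (sab : s19sgn a b = true) (scd : s19sgn c d = true)
    (sac : s19sgn a c = false) (sad : s19sgn a d = false)
    (sbc : s19sgn b c = false) (sbd : s19sgn b d = false) : False := by
  rcases a with ⟨ia, ka⟩ | ⟨ia, ka⟩ <;> rcases b with ⟨ib, kb⟩ | ⟨ib, kb⟩ <;>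
    rcases c with ⟨ic, kc⟩ | ⟨ic, kc⟩ <;> rcases d with ⟨id', kd⟩ | ⟨id', kd⟩
  -- LLLL
  · exact s19D40 ka kb kc kd hac.2 had.2 hbc.2 hbd.2 sab scd sac sad sbc sbd
  -- LLLR
  · obtain ⟨rfl, -⟩ := hab
    obtain ⟨rfl, hac2⟩ := hac
    exact s19D31 (s19rank ia id') ka kb kc kd hac2 hbc.2 sab scd sad sbd sac sbc
  -- LLRL
  · obtain ⟨rfl, -⟩ := hab
    obtain ⟨rfl, had2⟩ := had
    exact s19D31 (s19rank ia ic) ka kb kd kc had2 hbd.2 sab scd sac sbc sad sbd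
  -- LLRR
  · obtain ⟨rfl, -⟩ := hab
    obtain ⟨rfl, -⟩ := hcd
    exact s19D22a (s19rank ia ic) ka kb kc kd sab scd sac sad sbc sbd
  -- LRLL
  · obtain ⟨rfl, hac2⟩ := hac
    obtain ⟨rfl, -⟩ := hcd
    refine s19D31 (s19rank ia ib) kc kd ka kb ?_ ?_ scd sab sbc sbd ?_ ?_
    · rw [s19bAdj_symm]; exact hac2
    · rw [s19bAdj_symm]; exact had.2
    · rw [s19bNeg_symm]; exact sac
    · rw [s19bNeg_symm]; exact sad
  -- LRLR
  · obtain ⟨rfl, hac2⟩ := hac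
    obtain ⟨rfl, hbd2⟩ := hbd
    exact s19D22b (s19rank ia ib) ka kc kb kd hac2 hbd2 sac sbd sab scd sad sbc
  -- LRRL
  · obtain ⟨rfl, had2⟩ := had
    obtain ⟨rfl, hbc2⟩ := hbc
    exact s19D22b (s19rank ia ib) ka kd kb kc had2 hbc2 sad sbc sab scd sac sbd
  -- LRRR
  · obtain ⟨rfl, hbc2⟩ := hbc
    obtain ⟨rfl, hbd2⟩ := hbd
    refine s19D13 (s19rank ia ib) ka kc kd kb ?_ ?_ scd sab sac sad ?_ ?_
    · rw [s19bAdj_symm]; exact hbc2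
    · rw [s19bAdj_symm]; exact hbd2
    · rw [s19bNeg_symm]; exact sbc
    · rw [s19bNeg_symm]; exact sbd
  -- RLLL
  · obtain ⟨rfl, hbc2⟩ := hbc
    obtain ⟨rfl, -⟩ := hcd
    refine s19D31 (s19rank ib ia) kc kd kb ka ?_ ?_ scd sab sac sad ?_ ?_
    · rw [s19bAdj_symm]; exact hbc2
    · rw [s19bAdj_symm]; exact hbd.2
    · rw [s19bNeg_symm]; exact sbc
    · rw [s19bNeg_symm]; exact sbd
  -- RLLR
  · obtain ⟨rfl, hbc2⟩ := hbc
    obtain ⟨rfl, had2⟩ := had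
    exact s19D22b (s19rank ib ia) kb kc ka kd hbc2 had2 sbc sad sab scd sbd sac
  -- RLRL
  · obtain ⟨rfl, hbd2⟩ := hbd
    obtain ⟨rfl, hac2⟩ := hac
    exact s19D22b (s19rank ib ia) kb kd ka kc hbd2 hac2 sbd sac sab scd sbc sad
  -- RLRR
  · obtain ⟨rfl, hac2⟩ := hac
    obtain ⟨rfl, had2⟩ := had
    refine s19D13 (s19rank ib ia) kb kc kd ka ?_ ?_ scd sab sbc sbd ?_ ?_
    · rw [s19bAdj_symm]; exact hac2
    · rw [s19bAdj_symm]; exact had2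
    · rw [s19bNeg_symm]; exact sac
    · rw [s19bNeg_symm]; exact sad
  -- RRLL
  · obtain ⟨rfl, -⟩ := hab
    obtain ⟨rfl, -⟩ := hcd
    exact s19D22a (s19rank ic ia) kc kd ka kb scd sab sac sbc sad sbd
  -- RRLR
  · obtain ⟨rfl, -⟩ := hab
    obtain ⟨rfl, had2⟩ := had
    exact s19D13 (s19rank ic ia) kc ka kb kd had2 hbd.2 sab scd sac sbc sad sbd
  -- RRRL
  · obtain ⟨rfl, -⟩ := hab
    obtain ⟨rfl, hac2⟩ := hac
    exact s19D13 (s19rank id' ia) kd ka kb kc hac2 hbc.2 sab scd sad sbd sac sbc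
  -- RRRR
  · exact s19D40 ka kb kc kd hac.2 had.2 hbc.2 hbd.2 sab scd sac sad sbc sbd

lemma s19_noP4 (a b c d : s19V) (hab : s19G.Adj a b) (hbc : s19G.Adj b c)
    (hcd : s19G.Adj c d) (hac : ¬ s19G.Adj a c) (had : ¬ s19G.Adj a d)
    (hbd : ¬ s19G.Adj b d) : False := by
  rcases a with ⟨ia, ka⟩ | ⟨ia, ka⟩ <;> rcases b with ⟨ib, kb⟩ | ⟨ib, kb⟩ <;>
    rcases c with ⟨ic, kc⟩ | ⟨ic, kc⟩ <;> rcases d with ⟨id', kd⟩ | ⟨id', kd⟩ <;>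
      first
        | exact hac trivial
        | exact had trivial
        | exact hbd trivial
        | (obtain ⟨rfl, h1⟩ := hab
           obtain ⟨rfl, h2⟩ := hbc
           obtain ⟨rfl, h3⟩ := hcd
           rcases s19DP4 ka kb kc kd h1 h2 h3 with h | h | h
           · exact hac ⟨rfl, h⟩
           · exact had ⟨rfl, h⟩
           · exact hbd ⟨rfl, h⟩)

/-! ### The pigeonhole argument for the chromatic number -/

lemma s19_fin3_cases : ∀ r : Fin 3, r = 0 ∨ r = 1 ∨ r = 2 := by decide

lemma s19_exists3 (c : Fin 5 → Fin 5) (h01 : c 0 ≠ c 1) (h12 : c 1 ≠ c 2)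
    (h23 : c 2 ≠ c 3) (h34 : c 3 ≠ c 4) (h40 : c 4 ≠ c 0) :
    ∃ x y z : Fin 5, x ≠ y ∧ x ≠ z ∧ y ≠ z ∧
      (∃ k, c k = x) ∧ (∃ k, c k = y) ∧ (∃ k, c k = z) := by
  by_cases h20 : c 2 = c 0
  · by_cases h31 : c 3 = c 1
    · exact ⟨c 0, c 1, c 4, h01, Ne.symm h40, fun h => h34 (h31.trans h), ⟨0, rfl⟩,
        ⟨1, rfl⟩, ⟨4, rfl⟩⟩
    · exact ⟨c 0, c 1, c 3, h01, fun h => h23 (h20.trans h), fun h => h31 h.symm, ⟨0, rfl⟩,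
        ⟨1, rfl⟩, ⟨3, rfl⟩⟩
  · exact ⟨c 0, c 1, c 2, h01, fun h => h20 h.symm, h12, ⟨0, rfl⟩, ⟨1, rfl⟩, ⟨2, rfl⟩⟩

lemma s19_ranges_meet (c d : Fin 5 → Fin 5)
    (hc01 : c 0 ≠ c 1) (hc12 : c 1 ≠ c 2) (hc23 : c 2 ≠ c 3) (hc34 : c 3 ≠ c 4)
    (hc40 : c 4 ≠ c 0)
    (hd01 : d 0 ≠ d 1) (hd12 : d 1 ≠ d 2) (hd23 : d 2 ≠ d 3) (hd34 : d 3 ≠ d 4)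
    (hd40 : d 4 ≠ d 0) : ∃ k l, c k = d l := by
  by_contra hno
  push_neg at hno
  set S : Finset (Fin 5) := Finset.univ.image c with hS
  set T : Finset (Fin 5) := Finset.univ.image d with hT
  have hdisj : Disjoint S T := by
    rw [Finset.disjoint_left]
    rintro x hxS hxT
    obtain ⟨k, -, hk⟩ := Finset.mem_image.mp hxS
    obtain ⟨l, -, hl⟩ := Finset.mem_image.mp hxT
    exact hno k l (hk.trans hl.symm)
  have hcardS : 2 < S.card := by
    obtain ⟨x, y, z, hxy, hxz, hyz, ⟨k1, e1⟩, ⟨k2, e2⟩, ⟨k3, e3⟩⟩ :=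
      s19_exists3 c hc01 hc12 hc23 hc34 hc40
    exact Finset.two_lt_card_iff.mpr ⟨x, y, z,
      Finset.mem_image.mpr ⟨k1, Finset.mem_univ _, e1⟩,
      Finset.mem_image.mpr ⟨k2, Finset.mem_univ _, e2⟩,
      Finset.mem_image.mpr ⟨k3, Finset.mem_univ _, e3⟩, hxy, hxz, hyz⟩
  have hcardT : 2 < T.card := by
    obtain ⟨x, y, z, hxy, hxz, hyz, ⟨k1, e1⟩, ⟨k2, e2⟩, ⟨k3, e3⟩⟩ :=
      s19_exists3 d hd01 hd12 hd23 hd34 hd40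
    exact Finset.two_lt_card_iff.mpr ⟨x, y, z,
      Finset.mem_image.mpr ⟨k1, Finset.mem_univ _, e1⟩,
      Finset.mem_image.mpr ⟨k2, Finset.mem_univ _, e2⟩,
      Finset.mem_image.mpr ⟨k3, Finset.mem_univ _, e3⟩, hxy, hxz, hyz⟩
  have hunion : (S ∪ T).card = S.card + T.card := Finset.card_union_of_disjoint hdisj
  have hle : (S ∪ T).card ≤ 5 := by
    have := Finset.card_le_univ (S ∪ T)
    simpa using this
  omega


/-- there is a signed graph with no all-negative triangle, no (K_4,M),
no induced P_4, whose negative subgraph has chromatic number at least 6. -/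
theorem stmt19 :
    ∃ (V : Type) (_ : Fintype V) (G : SimpleGraph V) (σ : Sym2 V → ℤˣ),
      ¬ HasNegTriangle G σ ∧ ¬ HasK4M G σ ∧
        ¬ HasInducedCopy (pathGraph 4) G ∧
        (6 : ℕ∞) ≤ (negSubgraph G σ).chromaticNumber := by
  classical
  refine ⟨s19V, inferInstance, s19G, s19σ, ?_, ?_, ?_, ?_⟩
  · rintro ⟨u, v, w, huv, hvw, huw, suv, svw, suw⟩
    exact s19_noNegTri u v w huv hvw huw ((s19σ_neg_iff u v).mp suv)
      ((s19σ_neg_iff v w).mp svw) ((s19σ_neg_iff u w).mp suw)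
  · rintro ⟨a, b, c, d, -, -, -, -, -, -, hab, hac, had, hbc, hbd, hcd,
      sab, scd, sac, sad, sbc, sbd⟩
    exact s19_noK4M a b c d hab hac had hbc hbd hcd
      ((s19σ_neg_iff a b).mp sab) ((s19σ_neg_iff c d).mp scd)
      ((s19σ_pos_iff a c).mp sac) ((s19σ_pos_iff a d).mp sad)
      ((s19σ_pos_iff b c).mp sbc) ((s19σ_pos_iff b d).mp sbd)
  · rintro ⟨f, hf⟩
    have h01 : (pathGraph 4).Adj 0 1 := by rw [SimpleGraph.pathGraph_adj]; decide
    have h12 : (pathGraph 4).Adj 1 2 := by rw [SimpleGraph.pathGraph_adj]; decide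
    have h23 : (pathGraph 4).Adj 2 3 := by rw [SimpleGraph.pathGraph_adj]; decide
    have n02 : ¬ (pathGraph 4).Adj 0 2 := by rw [SimpleGraph.pathGraph_adj]; decide
    have n03 : ¬ (pathGraph 4).Adj 0 3 := by rw [SimpleGraph.pathGraph_adj]; decide
    have n13 : ¬ (pathGraph 4).Adj 1 3 := by rw [SimpleGraph.pathGraph_adj]; decide
    exact s19_noP4 (f 0) (f 1) (f 2) (f 3) ((hf 0 1).mpr h01) ((hf 1 2).mpr h12)
      ((hf 2 3).mpr h23) (fun h => n02 ((hf 0 2).mp h)) (fun h => n03 ((hf 0 3).mp h))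
      (fun h => n13 ((hf 1 3).mp h))
  · by_contra hlt
    push_neg at hlt
    have h5 : (negSubgraph s19G s19σ).chromaticNumber ≤ (5 : ℕ) := by
      have hne : (negSubgraph s19G s19σ).chromaticNumber ≠ ⊤ := hlt.ne_top
      obtain ⟨m, hm⟩ := WithTop.ne_top_iff_exists.mp hne
      rw [← hm] at hlt ⊢
      have h6 : (6 : ℕ∞) = ((6 : ℕ) : ℕ∞) := rfl
      rw [h6] at hlt
      have hm6 : m < 6 := Nat.cast_lt.mp hlt
      exact Nat.cast_le.mpr (Nat.lt_succ_iff.mp hm6)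
    obtain ⟨C⟩ := SimpleGraph.chromaticNumber_le_iff_colorable.mp h5
    set g : Fin s19N → (Fin 5 → Fin 5) := fun i k => C (Sum.inl (i, k)) with hg
    have hcard : (Finset.univ : Finset (Fin 5 → Fin 5)).card * 2 <
        (Finset.univ : Finset (Fin s19N)).card := by
      simp only [Finset.card_univ, Fintype.card_fun, Fintype.card_fin]
      norm_num
    obtain ⟨y, -, hy⟩ := Finset.exists_lt_card_fiber_of_mul_lt_card_of_maps_to
      (f := g) (fun a _ => Finset.mem_univ (g a)) hcard
    obtain ⟨i1, i2, i3, m1, m2, m3, h12', h13', h23'⟩ := Finset.two_lt_card_iff.mp hy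
    have hg1 : g i1 = y := (Finset.mem_filter.mp m1).2
    have hg2 : g i2 = y := (Finset.mem_filter.mp m2).2
    have hg3 : g i3 = y := (Finset.mem_filter.mp m3).2
    set d : Fin 5 → Fin 5 := fun l => C (Sum.inr ((i2, i3), l)) with hd
    have propA : ∀ (i : Fin s19N) (k k' : Fin 5), s19bNeg k k' = true →
        C (Sum.inl (i, k)) ≠ C (Sum.inl (i, k')) := by
      intro i k k' hb
      exact C.valid ⟨⟨rfl, s19bNeg_le_bAdj k k' hb⟩, (s19σ_neg_iff _ _).mpr hb⟩
    have propB : ∀ (j : Fin s19N × Fin s19N) (k k' : Fin 5), s19bNeg k k' = true →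
        C (Sum.inr (j, k)) ≠ C (Sum.inr (j, k')) := by
      intro j k k' hb
      exact C.valid ⟨⟨rfl, s19bNeg_le_bAdj k k' hb⟩, (s19σ_neg_iff _ _).mpr hb⟩
    have hprop : ∀ k k', s19bNeg k k' = true → y k ≠ y k' := by
      intro k k' hb
      rw [← hg1]
      exact propA i1 k k' hb
    obtain ⟨k, l, hkl⟩ := s19_ranges_meet y d
      (hprop 0 1 (by decide)) (hprop 1 2 (by decide)) (hprop 2 3 (by decide))
      (hprop 3 4 (by decide)) (hprop 4 0 (by decide))
      (propB (i2, i3) 0 1 (by decide)) (propB (i2, i3) 1 2 (by decide))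
      (propB (i2, i3) 2 3 (by decide)) (propB (i2, i3) 3 4 (by decide))
      (propB (i2, i3) 4 0 (by decide))
    have final : ∀ i' : Fin s19N, g i' = y →
        s19rank i' (i2, i3) = s19cls l - s19cls k → False := by
      intro i' hgi hr
      have hcross : s19cross (s19rank i' (i2, i3)) k l = true := by
        rw [hr]
        show (s19cls l == s19cls k + (s19cls l - s19cls k)) = true
        have hh : s19cls k + (s19cls l - s19cls k) = s19cls l := add_sub_cancel _ _
        rw [hh, beq_self_eq_true]
      have hadj : (negSubgraph s19G s19σ).Adj (Sum.inl (i', k)) (Sum.inr ((i2, i3), l)) :=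
        ⟨trivial, (s19σ_neg_iff _ _).mpr hcross⟩
      apply C.valid hadj
      show C (Sum.inl (i', k)) = C (Sum.inr ((i2, i3), l))
      have e1 : C (Sum.inl (i', k)) = y k := by rw [← hgi]
      rw [e1, hkl]
    rcases s19_fin3_cases (s19cls l - s19cls k) with hr | hr | hr
    · refine final i1 hg1 ?_
      rw [hr]
      show (if i1 = i2 then (1 : Fin 3) else if i1 = i3 then 2 else 0) = 0
      rw [if_neg h12', if_neg h13']
    · refine final i2 hg2 ?_
      rw [hr]
      show (if i2 = i2 then (1 : Fin 3) else if i2 = i3 then 2 else 0) = 1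
      rw [if_pos rfl]
    · refine final i3 hg3 ?_
      rw [hr]
      show (if i3 = i2 then (1 : Fin 3) else if i3 = i3 then 2 else 0) = 2
      rw [if_neg (Ne.symm h23'), if_pos rfl]

end SignedGS
end
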